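/- arXiv:1205.2075 — 3 statements merged into one kernel-verified Lean document; each statement's English description precedes it below -/
import Mathlib

section
/- Let N ≥ 1, let g : ℝ^N → ℝ be measurable and Q-periodic with mean ḡ, and let M ≥ 0 satisfy |g(x) − ḡ| ≤ M for almost every x ∈ ℝ^N. Let c₁ > 0 be an L¹ Poincaré constant for Q. Then for every ε > 0 and every continuously differentiable function w : ℝ^N → ℝ with compact support, |∫_{ℝ^N} (g(x/ε) − ḡ) w(x) dx| ≤ c₁ M ε ∫_{ℝ^N} |∇w(x)| dx. -/
open MeasureTheory

/-- The unit cube `Q = [0,1]^N` in `ℝ^N`. -/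
def unitCube (N : ℕ) : Set (EuclideanSpace ℝ (Fin N)) :=
  {x | ∀ i, x i ∈ Set.Icc (0 : ℝ) 1}

noncomputable def cubeBasis (N : ℕ) : Module.Basis (Fin N) ℝ (EuclideanSpace ℝ (Fin N)) :=
  (EuclideanSpace.basisFun (Fin N) ℝ).toBasis

lemma cubeBasis_repr {N : ℕ} (x : EuclideanSpace ℝ (Fin N)) (i : Fin N) :
    (cubeBasis N).repr x i = x i := rfl

lemma hyperplane_null {N : ℕ} (i : Fin N) (c : ℝ) :
    volume {x : EuclideanSpace ℝ (Fin N) | x i = c} = 0 := by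
  have e := EuclideanSpace.volume_preserving_symm_measurableEquiv_toLp (Fin N)
  have hms : MeasurableSet {f : Fin N → ℝ | f i = c} := by
    have hm : Measurable fun f : Fin N → ℝ => f i := measurable_pi_apply i
    exact hm (measurableSet_singleton c)
  have h : {x : EuclideanSpace ℝ (Fin N) | x i = c} =
      (MeasurableEquiv.toLp 2 (Fin N → ℝ)).symm ⁻¹' {f : Fin N → ℝ | f i = c} := rfl
  rw [h, e.measure_preimage hms.nullMeasurableSet]
  rw [show ((volume : Measure (Fin N → ℝ))) = Measure.pi fun _ => volume from volume_pi]
  exact Measure.pi_hyperplane (fun _ : Fin N => (volume : Measure ℝ)) i c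

lemma volume_unitCube {N : ℕ} : volume (unitCube N) = 1 := by
  have e := EuclideanSpace.volume_preserving_symm_measurableEquiv_toLp (Fin N)
  have h : unitCube N = (MeasurableEquiv.toLp 2 (Fin N → ℝ)).symm ⁻¹'
      (Set.univ.pi fun _ : Fin N => Set.Icc (0:ℝ) 1) := by
    ext x
    constructor
    · intro hx i _; exact hx i
    · intro hx i; exact hx i trivial
  rw [h, e.measure_preimage (MeasurableSet.univ_pi fun _ => measurableSet_Icc).nullMeasurableSet]
  rw [show ((volume : Measure (Fin N → ℝ))) = Measure.pi fun _ => volume from volume_pi]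
  rw [Measure.pi_pi]
  simp

/-- The `Ico`-cube fundamental domain. -/
noncomputable def cubeD (N : ℕ) : Set (EuclideanSpace ℝ (Fin N)) :=
  ZSpan.fundamentalDomain (cubeBasis N)

lemma mem_cubeD {N : ℕ} (x : EuclideanSpace ℝ (Fin N)) :
    x ∈ cubeD N ↔ ∀ i, x i ∈ Set.Ico (0:ℝ) 1 := Iff.rfl

lemma cubeD_ae_eq {N : ℕ} : (cubeD N : Set (EuclideanSpace ℝ (Fin N))) =ᵐ[volume] unitCube N := by
  rw [MeasureTheory.ae_eq_set]
  constructor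
  · have : cubeD N \ unitCube N = ∅ := by
      ext x
      simp only [Set.mem_diff, Set.mem_empty_iff_false, iff_false, not_and, not_not]
      intro hx i
      exact ⟨(hx i).1, le_of_lt (hx i).2⟩
    simp [this]
  · refine measure_mono_null (fun x hx => ?_)
      (measure_iUnion_null fun i => hyperplane_null i 1)
    obtain ⟨hx1, hx2⟩ := hx
    simp only [Set.mem_iUnion, Set.mem_setOf_eq]
    by_contra hc
    push_neg at hc
    exact hx2 fun i => ⟨(hx1 i).1, lt_of_le_of_ne (hx1 i).2 (hc i)⟩

lemma lattice_coords {N : ℕ} (v : EuclideanSpace ℝ (Fin N))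
    (hv : v ∈ Submodule.span ℤ (Set.range ⇑(cubeBasis N))) :
    ∃ z : Fin N → ℤ, ∀ i, v i = (z i : ℝ) := by
  induction hv using Submodule.span_induction with
  | mem x hx =>
    obtain ⟨j, rfl⟩ := hx
    refine ⟨fun i => if i = j then 1 else 0, fun i => ?_⟩
    classical
    have : (cubeBasis N) j = EuclideanSpace.single j (1:ℝ) := by
      rw [cubeBasis, OrthonormalBasis.coe_toBasis, EuclideanSpace.basisFun_apply]
    rw [this, EuclideanSpace.single_apply]
    by_cases h : i = j <;> simp [h]
  | zero => exact ⟨0, fun i => by simp⟩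
  | add x y hx hy ihx ihy =>
    obtain ⟨zx, hzx⟩ := ihx; obtain ⟨zy, hzy⟩ := ihy
    exact ⟨zx + zy, fun i => by
      have : (x + y) i = x i + y i := rfl
      rw [this, hzx, hzy, Pi.add_apply]; push_cast; ring⟩
  | smul a x hx ihx =>
    obtain ⟨zx, hzx⟩ := ihx
    exact ⟨a • zx, fun i => by
      have : (a • x) i = (a : ℝ) * x i := by
        rw [← Int.cast_smul_eq_zsmul ℝ]; rfl
      rw [this, hzx i, Pi.smul_apply, smul_eq_mul]; push_cast; ring⟩

lemma fderiv_translate {N : ℕ} (v : EuclideanSpace ℝ (Fin N) → ℝ) (hv : ContDiff ℝ 1 v)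
    (c x : EuclideanSpace ℝ (Fin N)) :
    fderiv ℝ (fun y => v (c + y)) x = fderiv ℝ v (c + x) := by
  have h2 : HasFDerivAt (fun y : EuclideanSpace ℝ (Fin N) => c + y)
      (ContinuousLinearMap.id ℝ _) x := (hasFDerivAt_id x).const_add c
  have h1 := ((hv.differentiable one_ne_zero (c + x)).hasFDerivAt).comp x h2
  simpa [Function.comp_def] using h1.fderiv

lemma key_estimate (N : ℕ)
    (g : EuclideanSpace ℝ (Fin N) → ℝ) (hgm : Measurable g)
    (hper : ∀ (x : EuclideanSpace ℝ (Fin N)) (z : Fin N → ℤ),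
      g (x + (show EuclideanSpace ℝ (Fin N) from WithLp.toLp 2 fun i => (z i : ℝ))) = g x)
    (gbar : ℝ) (hgbar : gbar = ∫ y in unitCube N, g y)
    (M : ℝ) (hM : 0 ≤ M)
    (hbd : ∀ᵐ x : EuclideanSpace ℝ (Fin N), |g x - gbar| ≤ M)
    (c₁ : ℝ) (hc₁ : 0 < c₁)
    (hpoinc : ∀ w : EuclideanSpace ℝ (Fin N) → ℝ, ContDiff ℝ 1 w →
      ∫ x in unitCube N, |w x - ∫ y in unitCube N, w y| ≤
        c₁ * ∫ x in unitCube N, ‖fderiv ℝ w x‖)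
    (v : EuclideanSpace ℝ (Fin N) → ℝ) (hv : ContDiff ℝ 1 v) (hcs : HasCompactSupport v) :
    |∫ x, (g x - gbar) * v x| ≤ c₁ * M * ∫ x, ‖fderiv ℝ v x‖ := by
  classical
  have hDae : (cubeD N : Set (EuclideanSpace ℝ (Fin N))) =ᵐ[volume] unitCube N := cubeD_ae_eq
  have hDvol : volume (cubeD N) = 1 := by
    rw [measure_congr hDae, volume_unitCube]
  have hμD : volume (cubeD N) ≠ ⊤ := by rw [hDvol]; exact ENNReal.one_ne_top
  set L := Submodule.span ℤ (Set.range ⇑(cubeBasis N)) with hL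
  haveI : MeasurableVAdd L (EuclideanSpace ℝ (Fin N)) :=
    (inferInstance : MeasurableVAdd L.toAddSubgroup (EuclideanSpace ℝ (Fin N)))
  haveI : VAddInvariantMeasure L (EuclideanSpace ℝ (Fin N)) volume :=
    (inferInstance : VAddInvariantMeasure L.toAddSubgroup (EuclideanSpace ℝ (Fin N)) volume)
  have hfund : IsAddFundamentalDomain L (cubeD N) volume :=
    ZSpan.isAddFundamentalDomain (cubeBasis N) volume
  -- periodicity for lattice vectors
  have hgper : ∀ (ℓ : L) (x : EuclideanSpace ℝ (Fin N)),
      g ((ℓ : EuclideanSpace ℝ (Fin N)) + x) = g x := by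
    intro ℓ x
    obtain ⟨z, hz⟩ := lattice_coords (ℓ : EuclideanSpace ℝ (Fin N)) ℓ.2
    have hℓ : (ℓ : EuclideanSpace ℝ (Fin N)) =
        (show EuclideanSpace ℝ (Fin N) from WithLp.toLp 2 fun i => (z i : ℝ)) := PiLp.ext hz
    rw [hℓ, add_comm]
    exact hper x z
  -- global integrabilities
  have hvc : Continuous v := hv.continuous
  have hvint : Integrable v := hvc.integrable_of_hasCompactSupport hcs
  have hFmeas : AEStronglyMeasurable (fun x => (g x - gbar) * v x) volume :=
    ((hgm.sub measurable_const).mul hvc.measurable).aestronglyMeasurable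
  have hFint : Integrable (fun x => (g x - gbar) * v x) := by
    refine Integrable.mono' (hvint.norm.const_mul M) hFmeas ?_
    filter_upwards [hbd] with x hx
    rw [Real.norm_eq_abs, abs_mul]
    exact mul_le_mul_of_nonneg_right hx (abs_nonneg _)
  have hdc : Continuous fun x => ‖fderiv ℝ v x‖ := (hv.continuous_fderiv one_ne_zero).norm
  have hGint : Integrable (fun x => ‖fderiv ℝ v x‖) :=
    hdc.integrable_of_hasCompactSupport ((hcs.fderiv (𝕜 := ℝ)).norm)
  -- g integrable on the cube
  have hgbd : ∀ᵐ x : EuclideanSpace ℝ (Fin N), ‖g x‖ ≤ M + |gbar| := by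
    filter_upwards [hbd] with x hx
    rw [Real.norm_eq_abs]
    calc |g x| = |(g x - gbar) + gbar| := by ring_nf
    _ ≤ |g x - gbar| + |gbar| := abs_add_le _ _
    _ ≤ M + |gbar| := add_le_add_left hx _
  have hgintD : IntegrableOn g (cubeD N) volume :=
    Measure.integrableOn_of_bounded hμD hgm.aestronglyMeasurable (ae_restrict_of_ae hgbd)
  have hgintU : IntegrableOn g (unitCube N) volume := by
    refine (hgintD.congr_set_ae hDae.symm : _)
  -- zero average of g - gbar on the cube
  have hzero : ∫ x in cubeD N, (g x - gbar) = 0 := by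
    rw [setIntegral_congr_set hDae]
    rw [integral_sub hgintU (integrableOn_const (by rw [volume_unitCube]; exact ENNReal.one_ne_top))]
    rw [setIntegral_const, measureReal_def, volume_unitCube]
    simp [hgbar]
  -- per-cube estimate
  have hterm : ∀ ℓ : L, |∫ x in cubeD N,
        (g ((ℓ : EuclideanSpace ℝ (Fin N)) + x) - gbar) * v ((ℓ : EuclideanSpace ℝ (Fin N)) + x)|
      ≤ c₁ * M * ∫ x in cubeD N, ‖fderiv ℝ v ((ℓ : EuclideanSpace ℝ (Fin N)) + x)‖ := by
    intro ℓ
    set c : EuclideanSpace ℝ (Fin N) := (ℓ : EuclideanSpace ℝ (Fin N)) with hc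
    set φ : EuclideanSpace ℝ (Fin N) → ℝ := fun x => v (c + x) with hφdef
    have hφ : ContDiff ℝ 1 φ := hv.comp (contDiff_const.add contDiff_id)
    have hφc : Continuous φ := hφ.continuous
    set φbar : ℝ := ∫ y in unitCube N, φ y with hφbar
    -- bound for φ
    obtain ⟨Cv, hCv⟩ : ∃ Cv : ℝ, ∀ x, ‖v x‖ ≤ Cv := by
      obtain ⟨Cv, hCv⟩ := hvc.norm.bddAbove_range_of_hasCompactSupport hcs.norm
      exact ⟨Cv, fun x => hCv ⟨x, rfl⟩⟩
    -- integrabilities on cubeD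
    have hint1 : IntegrableOn (fun x => (g x - gbar) * (φ x - φbar)) (cubeD N) volume := by
      refine Measure.integrableOn_of_bounded (M := M * (Cv + |φbar|)) hμD
        (((hgm.sub measurable_const).mul ((hφc.measurable).sub measurable_const)).aestronglyMeasurable) ?_
      refine ae_restrict_of_ae ?_
      filter_upwards [hbd] with x hx
      rw [Real.norm_eq_abs, abs_mul]
      have h1 : |φ x - φbar| ≤ Cv + |φbar| := by
        calc |φ x - φbar| ≤ |φ x| + |φbar| := abs_sub _ _
        _ ≤ Cv + |φbar| := add_le_add_left (hCv _) _
      exact mul_le_mul hx (le_trans (le_of_eq rfl) h1) (abs_nonneg _) hM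
    have hint2 : IntegrableOn (fun x => M * |φ x - φbar|) (cubeD N) volume := by
      refine Measure.integrableOn_of_bounded (M := M * (Cv + |φbar|)) hμD
        (continuous_const.mul (hφc.sub continuous_const).abs).aestronglyMeasurable ?_
      refine ae_restrict_of_ae (Filter.Eventually.of_forall fun x => ?_)
      rw [Real.norm_eq_abs, abs_mul, abs_of_nonneg hM]
      have h1 : |φ x - φbar| ≤ Cv + |φbar| := by
        calc |φ x - φbar| ≤ |φ x| + |φbar| := abs_sub _ _
        _ ≤ Cv + |φbar| := add_le_add_left (hCv _) _
      have := abs_abs (φ x - φbar)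
      exact mul_le_mul_of_nonneg_left (by rw [this]; exact h1) hM
    have hint3 : IntegrableOn (fun x => g x - gbar) (cubeD N) volume :=
      hgintD.sub (integrableOn_const (by rw [hDvol]; exact ENNReal.one_ne_top))
    have hint4 : IntegrableOn (fun x => (g x - gbar) * φ x) (cubeD N) volume := by
      refine Measure.integrableOn_of_bounded (M := M * Cv) hμD
        (((hgm.sub measurable_const).mul hφc.measurable).aestronglyMeasurable) ?_
      refine ae_restrict_of_ae ?_
      filter_upwards [hbd] with x hx
      rw [Real.norm_eq_abs, abs_mul]
      exact mul_le_mul hx (hCv _) (abs_nonneg _) hM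
    -- rewrite by periodicity
    have h1 : ∫ x in cubeD N, (g (c + x) - gbar) * v (c + x)
        = ∫ x in cubeD N, (g x - gbar) * φ x := by
      apply integral_congr_ae
      refine Filter.Eventually.of_forall fun x => ?_
      show (g (c + x) - gbar) * v (c + x) = (g x - gbar) * φ x
      rw [hgper ℓ x]
    -- split off the mean
    have hsplit : ∫ x in cubeD N, (g x - gbar) * φ x
        = ∫ x in cubeD N, (g x - gbar) * (φ x - φbar) := by
      have heq : ∀ x : EuclideanSpace ℝ (Fin N),
          (g x - gbar) * φ x = (g x - gbar) * (φ x - φbar) + (g x - gbar) * φbar := by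
        intro x; ring
      rw [integral_congr_ae (Filter.Eventually.of_forall heq),
        integral_add hint1 (hint3.mul_const φbar), integral_mul_const, hzero]
      ring
    -- main estimate
    have habs : |∫ x in cubeD N, (g x - gbar) * (φ x - φbar)|
        ≤ M * ∫ x in cubeD N, |φ x - φbar| := by
      calc |∫ x in cubeD N, (g x - gbar) * (φ x - φbar)|
          ≤ ∫ x in cubeD N, |(g x - gbar) * (φ x - φbar)| := by
            have := norm_integral_le_integral_norm (μ := volume.restrict (cubeD N))
              (fun x => (g x - gbar) * (φ x - φbar))
            simpa only [Real.norm_eq_abs] using this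
      _ ≤ ∫ x in cubeD N, M * |φ x - φbar| := by
            refine integral_mono_ae hint1.abs hint2 ?_
            refine ae_restrict_of_ae ?_
            filter_upwards [hbd] with x hx
            rw [abs_mul]
            exact mul_le_mul_of_nonneg_right hx (abs_nonneg _)
      _ = M * ∫ x in cubeD N, |φ x - φbar| := integral_const_mul M _
    -- Poincaré inequality
    have hpo := hpoinc φ hφ
    have hDtoU : ∫ x in cubeD N, |φ x - φbar| = ∫ x in unitCube N, |φ x - φbar| :=
      setIntegral_congr_set hDae
    have hderD : ∫ x in unitCube N, ‖fderiv ℝ φ x‖ = ∫ x in cubeD N, ‖fderiv ℝ v (c + x)‖ := by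
      rw [← setIntegral_congr_set hDae]
      apply integral_congr_ae
      refine Filter.Eventually.of_forall fun x => ?_
      exact congrArg norm (fderiv_translate v hv c x)
    rw [h1, hsplit]
    calc |∫ x in cubeD N, (g x - gbar) * (φ x - φbar)|
        ≤ M * ∫ x in cubeD N, |φ x - φbar| := habs
    _ = M * ∫ x in unitCube N, |φ x - φbar| := by rw [hDtoU]
    _ ≤ M * (c₁ * ∫ x in unitCube N, ‖fderiv ℝ φ x‖) := by
          exact mul_le_mul_of_nonneg_left hpo hM
    _ = c₁ * M * ∫ x in cubeD N, ‖fderiv ℝ v (c + x)‖ := by rw [hderD]; ring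
  -- sum over the lattice
  have hEq1 : ∫ x, (g x - gbar) * v x
      = ∑' ℓ : L, ∫ x in cubeD N,
          (g ((ℓ : EuclideanSpace ℝ (Fin N)) + x) - gbar) * v ((ℓ : EuclideanSpace ℝ (Fin N)) + x) :=
    hfund.integral_eq_tsum'' _ hFint
  set A : L → ENNReal := fun ℓ => ∫⁻ x in cubeD N,
      ENNReal.ofReal ‖fderiv ℝ v ((ℓ : EuclideanSpace ℝ (Fin N)) + x)‖ with hAdef
  have hA : ∫⁻ x, ENNReal.ofReal ‖fderiv ℝ v x‖ = ∑' ℓ : L, A ℓ :=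
    hfund.lintegral_eq_tsum'' _
  have hAfin : ∑' ℓ : L, A ℓ ≠ ⊤ := by
    rw [← hA]
    exact hGint.lintegral_lt_top.ne
  have hAne : ∀ ℓ : L, A ℓ ≠ ⊤ := fun ℓ => ne_top_of_le_ne_top hAfin (ENNReal.le_tsum ℓ)
  have hsummA : Summable fun ℓ : L => (A ℓ).toReal := ENNReal.summable_toReal hAfin
  have haeq : ∀ ℓ : L, ∫ x in cubeD N, ‖fderiv ℝ v ((ℓ : EuclideanSpace ℝ (Fin N)) + x)‖
      = (A ℓ).toReal := by
    intro ℓ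
    rw [integral_eq_lintegral_of_nonneg_ae (Filter.Eventually.of_forall fun x => norm_nonneg _)
      (by exact (hdc.comp (continuous_const.add continuous_id)).aestronglyMeasurable)]
  have htotal : ∫ x, ‖fderiv ℝ v x‖ = ∑' ℓ : L, (A ℓ).toReal := by
    rw [integral_eq_lintegral_of_nonneg_ae (Filter.Eventually.of_forall fun x => norm_nonneg _)
      hdc.aestronglyMeasurable, hA, ENNReal.tsum_toReal_eq hAne]
  have hterm' : ∀ ℓ : L, |∫ x in cubeD N,
        (g ((ℓ : EuclideanSpace ℝ (Fin N)) + x) - gbar) * v ((ℓ : EuclideanSpace ℝ (Fin N)) + x)|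
      ≤ c₁ * M * (A ℓ).toReal := fun ℓ => (haeq ℓ) ▸ hterm ℓ
  have hsummBound : Summable fun ℓ : L => c₁ * M * (A ℓ).toReal := hsummA.mul_left _
  have hsummTerm : Summable fun ℓ : L => ‖∫ x in cubeD N,
      (g ((ℓ : EuclideanSpace ℝ (Fin N)) + x) - gbar) * v ((ℓ : EuclideanSpace ℝ (Fin N)) + x)‖ := by
    refine Summable.of_nonneg_of_le (fun ℓ => norm_nonneg _) (fun ℓ => ?_) hsummBound
    rw [Real.norm_eq_abs]; exact hterm' ℓ
  rw [hEq1]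
  calc |∑' ℓ : L, ∫ x in cubeD N,
        (g ((ℓ : EuclideanSpace ℝ (Fin N)) + x) - gbar) * v ((ℓ : EuclideanSpace ℝ (Fin N)) + x)|
      ≤ ∑' ℓ : L, ‖∫ x in cubeD N,
        (g ((ℓ : EuclideanSpace ℝ (Fin N)) + x) - gbar) * v ((ℓ : EuclideanSpace ℝ (Fin N)) + x)‖ := by
        simpa [Real.norm_eq_abs] using norm_tsum_le_tsum_norm hsummTerm
  _ ≤ ∑' ℓ : L, c₁ * M * (A ℓ).toReal := by
        refine Summable.tsum_le_tsum (fun ℓ => ?_) hsummTerm hsummBound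
        rw [Real.norm_eq_abs]; exact hterm' ℓ
  _ = c₁ * M * ∑' ℓ : L, (A ℓ).toReal := tsum_mul_left
  _ = c₁ * M * ∫ x, ‖fderiv ℝ v x‖ := by rw [← htotal]

/-- the core averaging estimate (Oleinik-type lemma): for a `Q`-periodic
function `g` with mean `ḡ`, `|g - ḡ| ≤ M` a.e., and `c₁` an `L¹` Poincaré constant for `Q`,
for every `ε > 0` and every `C¹` compactly supported `w`,
`|∫ (g(x/ε) − ḡ) w(x) dx| ≤ c₁ M ε ∫ |∇w|`. -/
theorem averaging_estimate
    (N : ℕ) (hN : 1 ≤ N)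
    (g : EuclideanSpace ℝ (Fin N) → ℝ) (hgm : Measurable g)
    (hper : ∀ (x : EuclideanSpace ℝ (Fin N)) (z : Fin N → ℤ),
      g (x + (show EuclideanSpace ℝ (Fin N) from WithLp.toLp 2 fun i => (z i : ℝ))) = g x)
    (gbar : ℝ) (hgbar : gbar = ∫ y in unitCube N, g y)
    (M : ℝ) (hM : 0 ≤ M)
    (hbd : ∀ᵐ x : EuclideanSpace ℝ (Fin N), |g x - gbar| ≤ M)
    (c₁ : ℝ) (hc₁ : 0 < c₁)
    (hpoinc : ∀ w : EuclideanSpace ℝ (Fin N) → ℝ, ContDiff ℝ 1 w →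
      ∫ x in unitCube N, |w x - ∫ y in unitCube N, w y| ≤
        c₁ * ∫ x in unitCube N, ‖fderiv ℝ w x‖) :
    ∀ ε > (0 : ℝ), ∀ w : EuclideanSpace ℝ (Fin N) → ℝ,
      ContDiff ℝ 1 w → HasCompactSupport w →
      |∫ x, (g (ε⁻¹ • x) - gbar) * w x| ≤ c₁ * M * ε * ∫ x, ‖fderiv ℝ w x‖ := by
  intro ε hε w hw hcw
  set v : EuclideanSpace ℝ (Fin N) → ℝ := fun x => w (ε • x) with hvdef
  have hsm : ContDiff ℝ 1 fun x : EuclideanSpace ℝ (Fin N) => ε • x := contDiff_id.const_smul ε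
  have hv : ContDiff ℝ 1 v := hw.comp hsm
  have hcv : HasCompactSupport v := hcw.comp_smul (ne_of_gt hε)
  have hfd : ∀ x, fderiv ℝ v x = ε • fderiv ℝ w (ε • x) := by
    intro x
    have h2 : HasFDerivAt (fun y : EuclideanSpace ℝ (Fin N) => ε • y)
        (ε • ContinuousLinearMap.id ℝ (EuclideanSpace ℝ (Fin N))) x :=
      (hasFDerivAt_id x).const_smul ε
    have h1 := ((hw.differentiable one_ne_zero (ε • x)).hasFDerivAt).comp x h2
    simpa [Function.comp_def] using h1.fderiv
  have hnorm : ∀ x, ‖fderiv ℝ v x‖ = ε * ‖fderiv ℝ w (ε • x)‖ := by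
    intro x
    rw [hfd x, norm_smul, Real.norm_eq_abs, abs_of_pos hε]
  have hkey := key_estimate N g hgm hper gbar hgbar M hM hbd c₁ hc₁ hpoinc v hv hcv
  set F : EuclideanSpace ℝ (Fin N) → ℝ := fun y => (g (ε⁻¹ • y) - gbar) * w y with hFdef
  have hcomp : ∀ x, (g x - gbar) * v x = F (ε • x) := by
    intro x
    show (g x - gbar) * w (ε • x) = (g (ε⁻¹ • ε • x) - gbar) * w (ε • x)
    rw [smul_smul, inv_mul_cancel₀ (ne_of_gt hε), one_smul]
  have hLHS : ∫ x, (g x - gbar) * v x = (ε ^ N)⁻¹ * ∫ y, F y := by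
    rw [integral_congr_ae (Filter.Eventually.of_forall hcomp),
      Measure.integral_comp_smul volume F ε, finrank_euclideanSpace_fin,
      abs_of_pos (by positivity), smul_eq_mul]
  have hRHS : ∫ x, ‖fderiv ℝ v x‖ = ε * ((ε ^ N)⁻¹ * ∫ y, ‖fderiv ℝ w y‖) := by
    rw [integral_congr_ae (Filter.Eventually.of_forall hnorm), integral_const_mul]
    congr 1
    rw [show (fun x : EuclideanSpace ℝ (Fin N) => ‖fderiv ℝ w (ε • x)‖)
        = fun x => (fun y => ‖fderiv ℝ w y‖) (ε • x) from rfl,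
      Measure.integral_comp_smul volume (fun y => ‖fderiv ℝ w y‖) ε,
      finrank_euclideanSpace_fin, abs_of_pos (by positivity), smul_eq_mul]
  rw [hLHS, hRHS] at hkey
  have hpow : (0:ℝ) < (ε ^ N)⁻¹ := by positivity
  rw [abs_mul, abs_of_pos hpow] at hkey
  have h2 : (ε ^ N)⁻¹ * |∫ y, F y| ≤ (ε ^ N)⁻¹ * (c₁ * M * ε * ∫ x, ‖fderiv ℝ w x‖) :=
    hkey.trans_eq (by ring)
  exact (mul_le_mul_iff_right₀ hpow).mp h2
end

section
/- Let N ≥ 1, 1 < p < ∞, and let Ω ⊂ ℝ^N be a bounded open set. Let g : ℝ^N → ℝ be measurable and Q-periodic with mean ḡ, and let M ≥ 0 satisfy |g(x) − ḡ| ≤ M for almost every x ∈ ℝ^N. Let c₁ > 0 be an L¹ Poincaré constant for Q. Then for every ε > 0 and every u ∈ C¹_c(Ω), |∫_Ω (g(x/ε) − ḡ) |u(x)|^p dx| ≤ p c₁ M ε (∫_Ω |u|^p dx)^{(p−1)/p} (∫_Ω |∇u|^p dx)^{1/p}. -/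
open MeasureTheory

namespace AveragingAux

open Set

variable {N : ℕ} {ε : ℝ}


open Set


/-- The half-open unit cube. -/
def cube0 (N : ℕ) : Set (EuclideanSpace ℝ (Fin N)) :=
  {x | ∀ i, x i ∈ Set.Ico (0 : ℝ) 1}

lemma measurable_coord (i : Fin N) :
    Measurable fun x : EuclideanSpace ℝ (Fin N) => x i :=
  (measurable_pi_apply i).comp ((MeasurableEquiv.toLp 2 (Fin N → ℝ)).symm).measurable

lemma measurableSet_cube0 : MeasurableSet (cube0 N) := by
  have h : cube0 N = ⋂ i, (fun x : EuclideanSpace ℝ (Fin N) => x i) ⁻¹' Set.Ico (0:ℝ) 1 := by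
    ext x; simp [cube0]
  rw [h]
  exact MeasurableSet.iInter fun i => (measurable_coord i) measurableSet_Ico

lemma volume_cube0 : volume (cube0 N) = 1 := by
  have he : cube0 N =
      ((MeasurableEquiv.toLp 2 (Fin N → ℝ)).symm) ⁻¹' (Set.pi Set.univ fun _ => Set.Ico (0:ℝ) 1) := by
    ext x; simp [cube0, Set.mem_pi]
  rw [he, (EuclideanSpace.volume_preserving_symm_measurableEquiv_toLp (Fin N)).measure_preimage
    ((MeasurableSet.univ_pi fun _ => measurableSet_Ico).nullMeasurableSet)]
  rw [volume_pi_pi]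
  simp [Real.volume_Ico]

lemma hyperplane_null (i : Fin N) (c : ℝ) :
    volume {x : EuclideanSpace ℝ (Fin N) | x i = c} = 0 := by
  have he : {x : EuclideanSpace ℝ (Fin N) | x i = c} =
      ((MeasurableEquiv.toLp 2 (Fin N → ℝ)).symm) ⁻¹' {f : Fin N → ℝ | f i = c} := rfl
  have hms : MeasurableSet {f : Fin N → ℝ | f i = c} := by
    have : {f : Fin N → ℝ | f i = c} = (fun f : Fin N → ℝ => f i) ⁻¹' {c} := rfl
    rw [this]; exact measurable_pi_apply i (MeasurableSet.singleton c)
  rw [he, (EuclideanSpace.volume_preserving_symm_measurableEquiv_toLp (Fin N)).measure_preimage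
    hms.nullMeasurableSet]
  exact Measure.pi_hyperplane (fun _ : Fin N => (volume : Measure ℝ)) i c

lemma cube0_ae_eq : (cube0 N : Set (EuclideanSpace ℝ (Fin N))) =ᵐ[volume] unitCube N := by
  rw [MeasureTheory.ae_eq_set]
  constructor
  · have : cube0 N \ unitCube N = ∅ := by
      ext x
      simp only [Set.mem_diff, Set.mem_empty_iff_false, iff_false, not_and, not_not]
      intro hx i
      exact ⟨(hx i).1, le_of_lt (hx i).2⟩
    simp [this]
  · refine measure_mono_null (t := ⋃ i, {x : EuclideanSpace ℝ (Fin N) | x i = 1}) ?_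
      (measure_iUnion_null fun i => hyperplane_null i 1)
    intro x hx
    obtain ⟨hx1, hx2⟩ := hx
    simp only [cube0, Set.mem_setOf_eq, Set.mem_Ico] at hx2
    push_neg at hx2
    obtain ⟨i, hi⟩ := hx2
    exact Set.mem_iUnion.2 ⟨i, le_antisymm (hx1 i).2 (hi ((hx1 i).1))⟩

lemma setIntegral_cube0 (f : EuclideanSpace ℝ (Fin N) → ℝ) :
    ∫ x in cube0 N, f x = ∫ x in unitCube N, f x :=
  setIntegral_congr_set cube0_ae_eq





/-- The affine map `y ↦ ε • (y + c)`. -/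
noncomputable def ψ (ε : ℝ) (c : EuclideanSpace ℝ (Fin N)) :
    EuclideanSpace ℝ (Fin N) → EuclideanSpace ℝ (Fin N) :=
  fun y => ε • (y + c)

lemma psi_emb (hε : ε ≠ 0) (c : EuclideanSpace ℝ (Fin N)) :
    MeasurableEmbedding (ψ ε c) := by
  have h1 : MeasurableEmbedding (fun y : EuclideanSpace ℝ (Fin N) => y + c) :=
    (MeasurableEquiv.addRight c).measurableEmbedding
  have h2 : MeasurableEmbedding (fun x : EuclideanSpace ℝ (Fin N) => ε • x) := by
    have := ((Homeomorph.smul (Units.mk0 ε hε)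
      (α := EuclideanSpace ℝ (Fin N))).toMeasurableEquiv).measurableEmbedding
    exact this
  exact h2.comp h1

lemma psi_map (hε : 0 < ε) (c : EuclideanSpace ℝ (Fin N)) :
    Measure.map (ψ ε c) (volume : Measure (EuclideanSpace ℝ (Fin N))) =
      ENNReal.ofReal ((ε ^ N)⁻¹) • volume := by
  have hcomp : ψ ε c = (fun x : EuclideanSpace ℝ (Fin N) => ε • x) ∘ (fun y => y + c) := rfl
  rw [hcomp, ← Measure.map_map (measurable_const_smul ε) (measurable_add_const c),
    map_add_right_eq_self volume c, Measure.map_addHaar_smul volume hε.ne',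
    finrank_euclideanSpace_fin, abs_of_nonneg (by positivity)]

/-- Change of variables for the affine map `ψ`. -/
lemma cov (hε : 0 < ε) (c : EuclideanSpace ℝ (Fin N)) (h : EuclideanSpace ℝ (Fin N) → ℝ)
    (s : Set (EuclideanSpace ℝ (Fin N))) :
    ∫ x in (ψ ε c) '' s, h x = ε ^ N * ∫ y in s, h (ψ ε c y) := by
  have hemb := psi_emb hε.ne' c
  have key : ∫ y in s, h (ψ ε c y) =
      ∫ x in (ψ ε c) '' s, h x ∂(Measure.map (ψ ε c) volume) := by
    rw [hemb.setIntegral_map, hemb.injective.preimage_image]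
  rw [key, psi_map hε c, Measure.restrict_smul, integral_smul_measure,
    ENNReal.toReal_ofReal (by positivity), smul_eq_mul, ← mul_assoc,
    mul_inv_cancel₀ (by positivity), one_mul]

def zv (N : ℕ) (z : Fin N → ℤ) : EuclideanSpace ℝ (Fin N) := WithLp.toLp 2 (fun i => (z i : ℝ))

noncomputable def cell (N : ℕ) (ε : ℝ) (z : Fin N → ℤ) : Set (EuclideanSpace ℝ (Fin N)) :=
  (ψ ε (zv N z)) '' cube0 N

lemma psi_apply_coord (c : EuclideanSpace ℝ (Fin N)) (y : EuclideanSpace ℝ (Fin N)) (i : Fin N) :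
    ψ ε c y i = ε * (y i + c i) := rfl

lemma mem_cell (hε : 0 < ε) (z : Fin N → ℤ) (x : EuclideanSpace ℝ (Fin N)) :
    x ∈ cell N ε z ↔ ∀ i, ⌊x i / ε⌋ = z i := by
  constructor
  · rintro ⟨y, hy, rfl⟩ i
    rw [psi_apply_coord]
    have h1 : ε * (y i + (zv N z) i) / ε = y i + (z i : ℝ) := by
      field_simp [zv]; rfl
    rw [h1, Int.floor_add_intCast, Int.floor_eq_zero_iff.2 (hy i), zero_add]
  · intro h
    refine ⟨(show EuclideanSpace ℝ (Fin N) from WithLp.toLp 2 (fun i => x i / ε - z i)), fun i => ?_, ?_⟩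
    · have : ⌊x i / ε - (z i : ℝ)⌋ = 0 := by
        rw [Int.floor_sub_intCast, h i, sub_self]
      exact Int.floor_eq_zero_iff.1 this
    · apply PiLp.ext; intro i
      rw [psi_apply_coord]
      show ε * (x i / ε - (z i : ℝ) + (z i : ℝ)) = x i
      field_simp
      ring

lemma cell_disjoint (hε : 0 < ε) :
    Pairwise (Function.onFun Disjoint fun z : Fin N → ℤ => cell N ε z) := by
  intro z z' hne
  rw [Function.onFun, Set.disjoint_left]
  intro x hx hx'
  exact hne (funext fun i => by
    rw [← (mem_cell hε z x).1 hx i, ← (mem_cell hε z' x).1 hx' i])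

lemma cell_cover (hε : 0 < ε) :
    (⋃ z : Fin N → ℤ, cell N ε z) = Set.univ := by
  ext x
  simp only [Set.mem_iUnion, Set.mem_univ, iff_true]
  exact ⟨fun i => ⌊x i / ε⌋, (mem_cell hε _ x).2 fun i => rfl⟩


lemma cell_estimate (hε : 0 < ε)
    (g : EuclideanSpace ℝ (Fin N) → ℝ) (hgm : Measurable g)
    (hper : ∀ (x : EuclideanSpace ℝ (Fin N)) (z : Fin N → ℤ),
      g (x + (show EuclideanSpace ℝ (Fin N) from WithLp.toLp 2 (fun i => (z i : ℝ)))) = g x)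
    (gbar : ℝ) (hgbar0 : ∫ y in cube0 N, (g y - gbar) = 0)
    (M : ℝ) (hM : 0 ≤ M)
    (hbd : ∀ᵐ x : EuclideanSpace ℝ (Fin N), |g x - gbar| ≤ M)
    (c₁ : ℝ) (hc₁ : 0 ≤ c₁)
    (hpoinc : ∀ w : EuclideanSpace ℝ (Fin N) → ℝ, ContDiff ℝ 1 w →
      ∫ x in unitCube N, |w x - ∫ y in unitCube N, w y| ≤
        c₁ * ∫ x in unitCube N, ‖fderiv ℝ w x‖)
    (v : EuclideanSpace ℝ (Fin N) → ℝ) (hv : ContDiff ℝ 1 v) (hvs : HasCompactSupport v)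
    (z : Fin N → ℤ) :
    |∫ x in cell N ε z, (g (ε⁻¹ • x) - gbar) * v x| ≤
      M * c₁ * ε * ∫ x in cell N ε z, ‖fderiv ℝ v x‖ := by
  set c : EuclideanSpace ℝ (Fin N) := zv N z with hc
  set w : EuclideanSpace ℝ (Fin N) → ℝ := fun y => v (ψ ε c y) with hw_def
  have hψc : ∀ y, ψ ε c y = ε • (y + c) := fun _ => rfl
  have hw : ContDiff ℝ 1 w := by
    apply hv.comp
    exact (contDiff_id.add contDiff_const).const_smul ε
  set m : ℝ := ∫ y in unitCube N, w y with hm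
  -- boundedness of v
  obtain ⟨C, hC⟩ := (hv.continuous.norm).bounded_above_of_compact_support hvs.norm
  have hvol : volume (cube0 N) ≠ ⊤ := by rw [volume_cube0]; exact ENNReal.one_ne_top
  -- integrabilities on cube0
  have hgi : IntegrableOn (fun y => g y - gbar) (cube0 N) := by
    apply Measure.integrableOn_of_bounded hvol ((hgm.sub measurable_const).aestronglyMeasurable)
    exact (ae_restrict_of_ae hbd).mono fun x hx => by rwa [Real.norm_eq_abs]
  have hwcont : Continuous w := hw.continuous
  have hwi : IntegrableOn w (cube0 N) := by
    apply Measure.integrableOn_of_bounded hvol hwcont.aestronglyMeasurable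
    exact ae_of_all _ fun y => by simpa using hC (ψ ε c y)
  have hconsti : IntegrableOn (fun _ : EuclideanSpace ℝ (Fin N) => m) (cube0 N) :=
    integrableOn_const (by rw [volume_cube0]; exact ENNReal.one_ne_top)
  have hwmi : IntegrableOn (fun y => w y - m) (cube0 N) := hwi.sub hconsti
  have hgwi : IntegrableOn (fun y => (g y - gbar) * w y) (cube0 N) := by
    apply Integrable.mono' (hwi.norm.const_mul M)
      (((hgm.sub measurable_const).aestronglyMeasurable.mono_measure
        Measure.restrict_le_self).mul hwcont.aestronglyMeasurable)
    filter_upwards [ae_restrict_of_ae hbd] with y hy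
    simp only [Pi.mul_apply, norm_mul]
    exact mul_le_mul_of_nonneg_right (by rwa [Real.norm_eq_abs]) (norm_nonneg _)
  have hgwmi : IntegrableOn (fun y => (g y - gbar) * (w y - m)) (cube0 N) := by
    apply Integrable.mono' (hwmi.norm.const_mul M)
      (((hgm.sub measurable_const).aestronglyMeasurable.mono_measure
        Measure.restrict_le_self).mul (hwcont.sub continuous_const).aestronglyMeasurable)
    filter_upwards [ae_restrict_of_ae hbd] with y hy
    simp only [Pi.mul_apply, norm_mul]
    exact mul_le_mul_of_nonneg_right (by rwa [Real.norm_eq_abs]) (norm_nonneg _)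
  -- step 1 : subtract the mean
  have step1 : ∫ y in cube0 N, (g y - gbar) * w y = ∫ y in cube0 N, (g y - gbar) * (w y - m) := by
    have h2 : ∫ y in cube0 N, ((g y - gbar) * w y - (g y - gbar) * (w y - m)) =
        (∫ y in cube0 N, (g y - gbar)) * m := by
      simp_rw [← mul_sub, sub_sub_cancel]
      exact integral_mul_const m _
    rw [integral_sub hgwi hgwmi, hgbar0, zero_mul, sub_eq_zero] at h2
    exact h2
  -- step 2 : bound by M times oscillation
  have step2 : |∫ y in cube0 N, (g y - gbar) * (w y - m)| ≤ M * ∫ y in cube0 N, |w y - m| := by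
    calc |∫ y in cube0 N, (g y - gbar) * (w y - m)|
        ≤ ∫ y in cube0 N, ‖(g y - gbar) * (w y - m)‖ := by
          rw [← Real.norm_eq_abs]
          exact norm_integral_le_integral_norm _
      _ ≤ ∫ y in cube0 N, M * |w y - m| := by
          apply integral_mono_ae hgwmi.norm
          · simpa [Real.norm_eq_abs] using hwmi.norm.const_mul M
          · filter_upwards [ae_restrict_of_ae hbd] with y hy
            rw [norm_mul, Real.norm_eq_abs, Real.norm_eq_abs]
            exact mul_le_mul_of_nonneg_right hy (abs_nonneg _)
      _ = M * ∫ y in cube0 N, |w y - m| := integral_const_mul M _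
  -- step 3 : Poincaré
  have step3 : ∫ y in cube0 N, |w y - m| ≤ c₁ * ∫ x in unitCube N, ‖fderiv ℝ w x‖ := by
    rw [setIntegral_cube0]
    exact hpoinc w hw
  -- step 4 : derivative of w
  have hfdw : ∀ y, ‖fderiv ℝ w y‖ = ε * ‖fderiv ℝ v (ψ ε c y)‖ := by
    intro y
    have hψd : HasFDerivAt (ψ ε c)
        (ε • (ContinuousLinearMap.id ℝ (EuclideanSpace ℝ (Fin N)))) y :=
      ((hasFDerivAt_id y).add_const c).const_smul ε
    have hcomp : HasFDerivAt w
        ((fderiv ℝ v (ψ ε c y)).comp (ε • ContinuousLinearMap.id ℝ (EuclideanSpace ℝ (Fin N))))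
        y := ((hv.differentiable one_ne_zero (ψ ε c y)).hasFDerivAt).comp y hψd
    rw [hcomp.fderiv]
    have : (fderiv ℝ v (ψ ε c y)).comp (ε • ContinuousLinearMap.id ℝ (EuclideanSpace ℝ (Fin N)))
        = ε • (fderiv ℝ v (ψ ε c y)) := by
      ext x
      simp
    rw [this, norm_smul, Real.norm_eq_abs, abs_of_pos hε]
  have step4 : ∫ x in unitCube N, ‖fderiv ℝ w x‖ =
      ε * ∫ y in cube0 N, ‖fderiv ℝ v (ψ ε c y)‖ := by
    rw [← setIntegral_cube0]
    simp_rw [hfdw]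
    exact integral_const_mul ε _
  -- change of variables for the main integrand and the gradient
  have hper' : ∀ y, g (ε⁻¹ • ψ ε c y) = g y := by
    intro y
    rw [hψc, inv_smul_smul₀ hε.ne']
    exact hper y z
  have cov1 : ∫ x in cell N ε z, (g (ε⁻¹ • x) - gbar) * v x =
      ε ^ N * ∫ y in cube0 N, (g y - gbar) * w y := by
    rw [cell, cov hε]
    congr 1
    apply setIntegral_congr_fun measurableSet_cube0
    intro y _
    simp only [← hc]
    rw [hper' y]
  have cov2 : ∫ x in cell N ε z, ‖fderiv ℝ v x‖ =
      ε ^ N * ∫ y in cube0 N, ‖fderiv ℝ v (ψ ε c y)‖ := by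
    rw [cell, cov hε]
  -- assemble
  have hεN : (0:ℝ) ≤ ε ^ N := by positivity
  have hosc : (0:ℝ) ≤ ∫ y in cube0 N, |w y - m| :=
    integral_nonneg fun y => abs_nonneg _
  calc |∫ x in cell N ε z, (g (ε⁻¹ • x) - gbar) * v x|
      = ε ^ N * |∫ y in cube0 N, (g y - gbar) * w y| := by
        rw [cov1, abs_mul, abs_of_nonneg hεN]
    _ ≤ ε ^ N * (M * ∫ y in cube0 N, |w y - m|) := by
        rw [step1]
        exact mul_le_mul_of_nonneg_left step2 hεN
    _ ≤ ε ^ N * (M * (c₁ * ∫ x in unitCube N, ‖fderiv ℝ w x‖)) := by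
        apply mul_le_mul_of_nonneg_left _ hεN
        apply mul_le_mul_of_nonneg_left _ hM
        exact step3
    _ = M * c₁ * ε * (ε ^ N * ∫ y in cube0 N, ‖fderiv ℝ v (ψ ε c y)‖) := by
        rw [step4]; ring
    _ = M * c₁ * ε * ∫ x in cell N ε z, ‖fderiv ℝ v x‖ := by rw [cov2]


end AveragingAux

open AveragingAux in
/-- Theorem 3.1 of the paper. -/
theorem averaging_estimate_Lp
    (N : ℕ) (hN : 1 ≤ N) (p : ℝ) (hp : 1 < p)
    (Ω : Set (EuclideanSpace ℝ (Fin N))) (hΩo : IsOpen Ω)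
    (hΩb : Bornology.IsBounded Ω)
    (g : EuclideanSpace ℝ (Fin N) → ℝ) (hgm : Measurable g)
    (hper : ∀ (x : EuclideanSpace ℝ (Fin N)) (z : Fin N → ℤ),
      g (x + (show EuclideanSpace ℝ (Fin N) from WithLp.toLp 2 (fun i => (z i : ℝ)))) = g x)
    (gbar : ℝ) (hgbar : gbar = ∫ y in unitCube N, g y)
    (M : ℝ) (hM : 0 ≤ M)
    (hbd : ∀ᵐ x : EuclideanSpace ℝ (Fin N), |g x - gbar| ≤ M)
    (c₁ : ℝ) (hc₁ : 0 < c₁)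
    (hpoinc : ∀ w : EuclideanSpace ℝ (Fin N) → ℝ, ContDiff ℝ 1 w →
      ∫ x in unitCube N, |w x - ∫ y in unitCube N, w y| ≤
        c₁ * ∫ x in unitCube N, ‖fderiv ℝ w x‖) :
    ∀ ε > (0 : ℝ), ∀ u : EuclideanSpace ℝ (Fin N) → ℝ,
      ContDiff ℝ 1 u → HasCompactSupport u → tsupport u ⊆ Ω →
      |∫ x in Ω, (g (ε⁻¹ • x) - gbar) * |u x| ^ p| ≤
        p * c₁ * M * ε * (∫ x in Ω, |u x| ^ p) ^ ((p - 1) / p) *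
          (∫ x in Ω, ‖fderiv ℝ u x‖ ^ p) ^ (1 / p) := by
  intro ε hε u hu hcu hsupp
  have hp0 : (0:ℝ) < p := lt_trans zero_lt_one hp
  set v : EuclideanSpace ℝ (Fin N) → ℝ := fun x => ‖u x‖ ^ p with hv_def
  have hup : ∀ x, |u x| ^ p = v x := fun x => by simp [hv_def, Real.norm_eq_abs]
  have hvC : ContDiff ℝ 1 v := hu.norm_rpow hp
  have hvs : HasCompactSupport v :=
    hcu.comp_left (g := fun t : ℝ => ‖t‖ ^ p) (by simp [Real.zero_rpow hp0.ne'])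
  have hvint : Integrable v := hvC.continuous.integrable_of_hasCompactSupport hvs
  have hGm : Measurable fun x : EuclideanSpace ℝ (Fin N) => g (ε⁻¹ • x) - gbar :=
    (hgm.comp (measurable_const_smul ε⁻¹)).sub measurable_const
  have hGbd : ∀ᵐ x : EuclideanSpace ℝ (Fin N), |g (ε⁻¹ • x) - gbar| ≤ M := by
    rw [ae_iff] at hbd ⊢
    have hset : {x : EuclideanSpace ℝ (Fin N) | ¬ |g (ε⁻¹ • x) - gbar| ≤ M} =
        (ε⁻¹ • ·) ⁻¹' {x : EuclideanSpace ℝ (Fin N) | ¬ |g x - gbar| ≤ M} := rfl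
    rw [hset, Measure.addHaar_preimage_smul volume (inv_ne_zero hε.ne'), hbd, mul_zero]
  have hfint : Integrable (fun x => (g (ε⁻¹ • x) - gbar) * v x) := by
    apply Integrable.mono' (hvint.norm.const_mul M)
      (hGm.aestronglyMeasurable.mul hvC.continuous.aestronglyMeasurable)
    filter_upwards [hGbd] with x hx
    simp only [Pi.mul_apply, norm_mul]
    exact mul_le_mul_of_nonneg_right (by rwa [Real.norm_eq_abs]) (norm_nonneg _)
  have hfdc : Continuous fun x => fderiv ℝ v x := hvC.continuous_fderiv one_ne_zero
  have hfdint : Integrable (fun x => ‖fderiv ℝ v x‖) :=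
    hfdc.norm.integrable_of_hasCompactSupport (hvs.fderiv ℝ).norm
  -- reduce the set integrals to integrals over all of space
  have hLHS : ∫ x in Ω, (g (ε⁻¹ • x) - gbar) * |u x| ^ p
      = ∫ x, (g (ε⁻¹ • x) - gbar) * v x := by
    simp_rw [hup]
    apply setIntegral_eq_integral_of_forall_compl_eq_zero
    intro x hx
    have hux : u x = 0 := image_eq_zero_of_notMem_tsupport (fun h => hx (hsupp h))
    simp [hv_def, hux, Real.zero_rpow hp0.ne']
  have hR1 : ∫ x in Ω, |u x| ^ p = ∫ x, ‖u x‖ ^ p := by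
    simp_rw [← Real.norm_eq_abs]
    apply setIntegral_eq_integral_of_forall_compl_eq_zero
    intro x hx
    rw [image_eq_zero_of_notMem_tsupport (fun h => hx (hsupp h))]
    simp [Real.zero_rpow hp0.ne']
  have hR2 : ∫ x in Ω, ‖fderiv ℝ u x‖ ^ p = ∫ x, ‖fderiv ℝ u x‖ ^ p := by
    apply setIntegral_eq_integral_of_forall_compl_eq_zero
    intro x hx
    have hfd0 : fderiv ℝ u x = 0 := by
      have hxn : x ∉ tsupport u := fun h => hx (hsupp h)
      exact Function.notMem_support.1 fun h => hxn (support_fderiv_subset ℝ h)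
    rw [hfd0]
    simp [Real.zero_rpow hp0.ne']
  -- mean-zero property on the half-open cube
  have hvol : volume (cube0 N) ≠ ⊤ := by rw [volume_cube0]; exact ENNReal.one_ne_top
  have hgint : IntegrableOn g (cube0 N) := by
    apply Measure.integrableOn_of_bounded (M := M + |gbar|) hvol hgm.aestronglyMeasurable
    filter_upwards [ae_restrict_of_ae hbd] with x hx
    rw [Real.norm_eq_abs]
    have h1 : |g x| - |gbar| ≤ |g x - gbar| := abs_sub_abs_le_abs_sub _ _
    linarith
  have hgbar0 : ∫ y in cube0 N, (g y - gbar) = 0 := by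
    rw [integral_sub hgint (integrableOn_const (by
      rw [volume_cube0]; exact ENNReal.one_ne_top))]
    rw [setIntegral_cube0, setIntegral_const, measureReal_def, volume_cube0]
    simp [← hgbar]
  -- partition into cells
  have hmcell : ∀ z : Fin N → ℤ, MeasurableSet (cell N ε z) := fun z =>
    ((psi_emb hε.ne' _).measurableSet_image).2 measurableSet_cube0
  have hS1 : HasSum (fun z : Fin N → ℤ => ∫ x in cell N ε z, (g (ε⁻¹ • x) - gbar) * v x)
      (∫ x, (g (ε⁻¹ • x) - gbar) * v x) := by
    have h := hasSum_integral_iUnion hmcell (cell_disjoint hε)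
      (by rw [cell_cover hε]; exact hfint.integrableOn)
    rwa [cell_cover hε, Measure.restrict_univ] at h
  have hS2 : HasSum (fun z : Fin N → ℤ => ∫ x in cell N ε z, ‖fderiv ℝ v x‖)
      (∫ x, ‖fderiv ℝ v x‖) := by
    have h := hasSum_integral_iUnion hmcell (cell_disjoint hε)
      (by rw [cell_cover hε]; exact hfdint.integrableOn)
    rwa [cell_cover hε, Measure.restrict_univ] at h
  have hballs : ∀ z : Fin N → ℤ,
      |∫ x in cell N ε z, (g (ε⁻¹ • x) - gbar) * v x| ≤
        M * c₁ * ε * ∫ x in cell N ε z, ‖fderiv ℝ v x‖ := fun z =>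
    cell_estimate hε g hgm hper gbar hgbar0 M hM hbd c₁ hc₁.le hpoinc v hvC hvs z
  have hsumb : Summable fun z : Fin N → ℤ =>
      M * c₁ * ε * ∫ x in cell N ε z, ‖fderiv ℝ v x‖ := hS2.summable.mul_left _
  have habs : Summable fun z : Fin N → ℤ =>
      |∫ x in cell N ε z, (g (ε⁻¹ • x) - gbar) * v x| :=
    Summable.of_nonneg_of_le (fun z => abs_nonneg _) hballs hsumb
  have key : |∫ x, (g (ε⁻¹ • x) - gbar) * v x| ≤ M * c₁ * ε * ∫ x, ‖fderiv ℝ v x‖ := by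
    rw [← hS1.tsum_eq, ← hS2.tsum_eq, ← tsum_mul_left]
    calc |∑' z : Fin N → ℤ, ∫ x in cell N ε z, (g (ε⁻¹ • x) - gbar) * v x|
        ≤ ∑' z : Fin N → ℤ, |∫ x in cell N ε z, (g (ε⁻¹ • x) - gbar) * v x| := by
          have h := norm_tsum_le_tsum_norm (f := fun z : Fin N → ℤ =>
            ∫ x in cell N ε z, (g (ε⁻¹ • x) - gbar) * v x)
            (by simpa [Real.norm_eq_abs] using habs)
          simpa [Real.norm_eq_abs] using h
      _ ≤ ∑' z : Fin N → ℤ, M * c₁ * ε * ∫ x in cell N ε z, ‖fderiv ℝ v x‖ :=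
          Summable.tsum_le_tsum hballs habs hsumb
  -- chain rule bound and Hölder
  have hfdub : ∀ x, ‖fderiv ℝ v x‖ ≤ p * (‖u x‖ ^ (p - 1) * ‖fderiv ℝ u x‖) := by
    intro x
    have h := norm_fderiv_norm_rpow_le (f := u) (hu.differentiable one_ne_zero) hp (x := x)
    rw [← hv_def] at h
    calc ‖fderiv ℝ v x‖ ≤ p * ‖u x‖ ^ (p - 1) * ‖fderiv ℝ u x‖ := h
      _ = p * (‖u x‖ ^ (p - 1) * ‖fderiv ℝ u x‖) := by ring
  have hcont1 : Continuous fun x => ‖u x‖ ^ (p - 1) :=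
    (hu.continuous.norm).rpow_const (fun x => Or.inr (by linarith))
  have hFc : Continuous fun x => ‖u x‖ ^ (p - 1) * ‖fderiv ℝ u x‖ :=
    hcont1.mul (hu.continuous_fderiv one_ne_zero).norm
  have hFs : HasCompactSupport fun x => ‖u x‖ ^ (p - 1) * ‖fderiv ℝ u x‖ :=
    ((hcu.fderiv ℝ).norm).mul_left
  have hFint : Integrable (fun x => ‖u x‖ ^ (p - 1) * ‖fderiv ℝ u x‖) :=
    hFc.integrable_of_hasCompactSupport hFs
  have h2 : ∫ x, ‖fderiv ℝ v x‖ ≤ p * ∫ x, ‖u x‖ ^ (p - 1) * ‖fderiv ℝ u x‖ := by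
    calc ∫ x, ‖fderiv ℝ v x‖
        ≤ ∫ x, p * (‖u x‖ ^ (p - 1) * ‖fderiv ℝ u x‖) :=
          integral_mono hfdint (hFint.const_mul p) hfdub
      _ = p * ∫ x, ‖u x‖ ^ (p - 1) * ‖fderiv ℝ u x‖ := integral_const_mul p _
  have hpq' : p.HolderConjugate (p / (p - 1)) :=
    (Real.holderConjugate_iff_eq_conjExponent hp).2 rfl
  have hmem1 : MemLp (fun x => ‖u x‖ ^ (p - 1)) (ENNReal.ofReal (p / (p - 1))) := by
    apply hcont1.memLp_of_hasCompactSupport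
    exact hcu.comp_left (g := fun t : ℝ => ‖t‖ ^ (p - 1))
      (by simp [Real.zero_rpow (by linarith : p - 1 ≠ 0)])
  have hmem2 : MemLp (fun x => ‖fderiv ℝ u x‖) (ENNReal.ofReal p) :=
    ((hu.continuous_fderiv one_ne_zero).norm).memLp_of_hasCompactSupport (hcu.fderiv ℝ).norm
  have holder : ∫ x, ‖u x‖ ^ (p - 1) * ‖fderiv ℝ u x‖ ≤
      (∫ x, ‖u x‖ ^ p) ^ ((p - 1) / p) * (∫ x, ‖fderiv ℝ u x‖ ^ p) ^ (1 / p) := by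
    have h := integral_mul_le_Lp_mul_Lq_of_nonneg hpq'.symm
      (ae_of_all _ fun x => Real.rpow_nonneg (norm_nonneg _) _)
      (ae_of_all _ fun x => norm_nonneg _) hmem1 hmem2
    have hexp : ∀ x : EuclideanSpace ℝ (Fin N),
        (‖u x‖ ^ (p - 1)) ^ (p / (p - 1)) = ‖u x‖ ^ p := by
      intro x
      rw [← Real.rpow_mul (norm_nonneg _), hpq'.sub_one_mul_conj]
    simp_rw [hexp] at h
    have hq : 1 / (p / (p - 1)) = (p - 1) / p := one_div_div _ _
    rwa [hq] at h
  -- final assembly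
  rw [hLHS, hR1, hR2]
  have hnn : (0:ℝ) ≤ M * c₁ * ε := by positivity
  calc |∫ x, (g (ε⁻¹ • x) - gbar) * v x|
      ≤ M * c₁ * ε * ∫ x, ‖fderiv ℝ v x‖ := key
    _ ≤ M * c₁ * ε * (p * ∫ x, ‖u x‖ ^ (p - 1) * ‖fderiv ℝ u x‖) :=
        mul_le_mul_of_nonneg_left h2 hnn
    _ ≤ M * c₁ * ε * (p * ((∫ x, ‖u x‖ ^ p) ^ ((p - 1) / p) *
          (∫ x, ‖fderiv ℝ u x‖ ^ p) ^ (1 / p))) := by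
        apply mul_le_mul_of_nonneg_left _ hnn
        exact mul_le_mul_of_nonneg_left holder hp0.le
    _ = p * c₁ * M * ε * (∫ x, ‖u x‖ ^ p) ^ ((p - 1) / p) *
          (∫ x, ‖fderiv ℝ u x‖ ^ p) ^ (1 / p) := by ring
end

section
/- Let N ≥ 1, 1 < p < ∞, and let Ω ⊂ ℝ^N be a bounded open set. Let m : ℝ^N → ℝ be measurable and Q-periodic with mean m̄ and with 0 < m₋ ≤ m(x) ≤ m₊ < ∞ for almost every x. For a weight w that is either the function x ↦ m(x/ε) or the constant m̄, define λ₁(w) = inf { (∫_Ω |∇u|^p dx) / (∫_Ω w(x)|u(x)|^p dx) : u ∈ C¹_c(Ω), u not identically 0 }, and set μ₁ = λ₁(1) (the weight identically 1); assume μ₁ > 0. Suppose K ≥ 0 is a constant such that for every ε > 0 and every u ∈ C¹_c(Ω), |∫_Ω (m(x/ε) − m̄)|u(x)|^p dx| ≤ K ε (∫_Ω |u|^p dx)^{(p−1)/p} (∫_Ω |∇u|^p dx)^{1/p}. Then for every ε > 0, |λ₁(m(·/ε)) − λ₁(m̄)| ≤ K m₊^{1/p} m₋^{−1/p−2} μ₁^{1/p+1}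 ε. -/
open MeasureTheory

lemma key_alg (p D a i b c mm mb mp : ℝ) (hp : 1 < p) (hD : 0 ≤ D) (ha : 0 ≤ a)
    (hi : 0 < i) (hmm : 0 < mm) (hmb : mm ≤ mb) (hmp : mb ≤ mp)
    (hb1 : mm * i ≤ b) (hb2 : b ≤ mp * i) (hc : c = mb * i)
    (habs : |b - c| ≤ D * i ^ ((p-1)/p) * a ^ (1/p)) :
    a / b ≤ a / c + D * mb ^ (1/p) * (a / c) ^ (1 + 1/p) / mm ∧
    a / c ≤ a / b + D * mp ^ (1/p) * (a / b) ^ (1 + 1/p) / mb := by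
  have hp0 : 0 < p := lt_trans one_pos hp
  have hmb0 : 0 < mb := lt_of_lt_of_le hmm hmb
  have hmp0 : 0 < mp := lt_of_lt_of_le hmb0 hmp
  have hb0 : 0 < b := lt_of_lt_of_le (mul_pos hmm hi) hb1
  have hc0 : 0 < c := hc ▸ mul_pos hmb0 hi
  obtain ⟨β, hβdef⟩ : ∃ x, x = i ^ (1/p) := ⟨_, rfl⟩
  have hβ0 : 0 < β := hβdef ▸ Real.rpow_pos_of_pos hi _
  obtain ⟨α, hαdef⟩ : ∃ x, x = a ^ (1/p) := ⟨_, rfl⟩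
  have hα0 : 0 ≤ α := hαdef ▸ Real.rpow_nonneg ha _
  have hii : i ^ ((p-1)/p) = i / β := by
    rw [show (p-1)/p = 1 - 1/p by field_simp, Real.rpow_sub hi, Real.rpow_one, hβdef]
  rw [hii, ← hαdef] at habs
  have h1 : (c - b) * β ≤ D * i * α := by
    have h2 : (c - b) ≤ D * (i / β) * α := by
      have := neg_le_of_abs_le habs; linarith
    calc (c - b) * β ≤ (D * (i / β) * α) * β := mul_le_mul_of_nonneg_right h2 hβ0.le
      _ = D * i * α := by field_simp
  have h1' : (b - c) * β ≤ D * i * α := by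
    have h2 : (b - c) ≤ D * (i / β) * α := le_trans (le_abs_self _) habs
    calc (b - c) * β ≤ (D * (i / β) * α) * β := mul_le_mul_of_nonneg_right h2 hβ0.le
      _ = D * i * α := by field_simp
  rcases eq_or_lt_of_le ha with rfl | ha0
  · constructor <;>
    · rw [zero_div, zero_div, Real.zero_rpow (by positivity : (1:ℝ) + 1/p ≠ 0)]
      positivity
  have hac : 0 < a / c := div_pos ha0 hc0
  have hab : 0 < a / b := div_pos ha0 hb0
  obtain ⟨γ, hγdef⟩ : ∃ x, x = b ^ (1/p) := ⟨_, rfl⟩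
  have hγ0 : 0 < γ := hγdef ▸ Real.rpow_pos_of_pos hb0 _
  obtain ⟨mbp, hmbpdef⟩ : ∃ x, x = mb ^ (1/p) := ⟨_, rfl⟩
  obtain ⟨mpp, hmppdef⟩ : ∃ x, x = mp ^ (1/p) := ⟨_, rfl⟩
  have hmbp : 0 < mbp := hmbpdef ▸ Real.rpow_pos_of_pos hmb0 _
  have hmpp : 0 < mpp := hmppdef ▸ Real.rpow_pos_of_pos hmp0 _
  have hγ : γ ≤ mpp * β := by
    rw [hγdef, hmppdef, hβdef]
    calc b ^ (1/p) ≤ (mp * i) ^ (1/p) := Real.rpow_le_rpow hb0.le hb2 (by positivity)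
      _ = mp ^ (1/p) * i ^ (1/p) := Real.mul_rpow hmp0.le hi.le
  have hrc : (a / c) ^ (1 + 1/p) = a / c * (α / (mbp * β)) := by
    rw [Real.rpow_add hac, Real.rpow_one, Real.div_rpow ha0.le hc0.le, hc,
      Real.mul_rpow hmb0.le hi.le, ← hαdef, ← hβdef, ← hmbpdef]
  have hrb : (a / b) ^ (1 + 1/p) = a / b * (α / γ) := by
    rw [Real.rpow_add hab, Real.rpow_one, Real.div_rpow ha0.le hb0.le, ← hαdef, ← hγdef]
  constructor
  · rw [hrc, ← hmbpdef]
    have hterm : D * mbp * (a / c * (α / (mbp * β))) / mm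
        = D * a * α / (c * β * mm) := by field_simp
    rw [hterm, div_add_div _ _ hc0.ne' (by positivity), div_le_div_iff₀ hb0 (by positivity)]
    have hA : a * mm * ((c - b) * β) ≤ a * mm * (D * i * α) :=
      mul_le_mul_of_nonneg_left h1 (by positivity)
    have hB : D * a * α * (mm * i) ≤ D * a * α * b :=
      mul_le_mul_of_nonneg_left hb1 (by positivity)
    have main1 : a * c * β * mm ≤ a * b * β * mm + D * a * α * b := by linarith [hA, hB]
    linarith [mul_le_mul_of_nonneg_left main1 hc0.le]
  · rw [hrb, ← hmppdef]
    have hterm : D * mpp * (a / b * (α / γ)) / mb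
        = D * mpp * a * α / (b * γ * mb) := by field_simp
    rw [hterm, div_add_div _ _ hb0.ne' (by positivity), div_le_div_iff₀ hc0 (by positivity)]
    have main2 : a * b * γ * mb ≤ a * c * γ * mb + D * mpp * a * α * c := by
      rcases le_or_gt b c with hbc | hbc
      · have t1 : a * γ * mb * b ≤ a * γ * mb * c :=
          mul_le_mul_of_nonneg_left hbc (by positivity)
        have t2 : 0 ≤ D * mpp * a * α * c := by positivity
        linarith [t1, t2]
      · have e4 : a * mb * ((b - c) * γ) ≤ a * mb * mpp * (D * i * α) := by
          calc a * mb * ((b - c) * γ) ≤ a * mb * ((b - c) * (mpp * β)) :=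
                mul_le_mul_of_nonneg_left (mul_le_mul_of_nonneg_left hγ (by linarith))
                  (by positivity)
            _ = a * mb * mpp * ((b - c) * β) := by ring
            _ ≤ a * mb * mpp * (D * i * α) := mul_le_mul_of_nonneg_left h1' (by positivity)
        have e5 : a * mb * mpp * (D * i * α) = D * mpp * a * α * c := by rw [hc]; ring
        linarith [e4, e5]
    linarith [mul_le_mul_of_nonneg_left main2 hb0.le]


lemma lim_aux (x y C e : ℝ) (hy : 0 ≤ y) (he : 0 < e)
    (h : ∀ δ > (0:ℝ), x ≤ (y + δ) + C * (y + δ) ^ e) : x ≤ y + C * y ^ e := by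
  have hc1 : ContinuousAt (fun t : ℝ => y + t) 0 := by fun_prop
  have hc2 : ContinuousAt (fun s : ℝ => s ^ e) y :=
    Real.continuousAt_rpow_const y e (Or.inr he.le)
  have hcont : ContinuousAt (fun t : ℝ => (y + t) + C * (y + t) ^ e) 0 := by
    have h3 : ContinuousAt (fun t : ℝ => (y + t) ^ e) 0 := by
      have hc2' : ContinuousAt (fun s : ℝ => s ^ e) ((fun t : ℝ => y + t) 0) := by
        simpa using hc2
      exact hc2'.comp hc1
    exact hc1.add (continuousAt_const.mul h3)
  have ht : Filter.Tendsto (fun δ : ℝ => (y + δ) + C * (y + δ) ^ e)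
      (nhdsWithin 0 (Set.Ioi 0)) (nhds (y + C * y ^ e)) := by
    have h5 := hcont.tendsto.mono_left (nhdsWithin_le_nhds (s := Set.Ioi (0:ℝ)))
    simpa using h5
  exact ge_of_tendsto ht (Filter.eventually_of_mem self_mem_nhdsWithin fun δ hδ => h δ hδ)

lemma mm_neg_two (mm : ℝ) (hmm : 0 < mm) : mm ^ ((-2):ℝ) = (mm * mm)⁻¹ := by
  rw [Real.rpow_neg hmm.le, show ((2:ℝ)) = ((2:ℕ):ℝ) by norm_num, Real.rpow_natCast]
  norm_num [pow_two]

lemma fb1 (p K ε mm mb mp mu lam : ℝ) (hp : 1 < p) (hK : 0 ≤ K) (hε : 0 < ε)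
    (hmm : 0 < mm) (hmb : mm ≤ mb) (hmp : mb ≤ mp) (hmu : 0 ≤ mu) (hlam : 0 ≤ lam)
    (h : mb * lam ≤ mu) :
    K * ε * mb ^ (1/p) / mm * lam ^ (1 + 1/p) ≤
      K * mp ^ (1/p) * mm ^ (-(1/p) - 2) * mu ^ (1/p + 1) * ε := by
  have hp0 : (0:ℝ) < p := one_pos.trans hp
  have hmb0 : 0 < mb := lt_of_lt_of_le hmm hmb
  have hmp0 : 0 < mp := lt_of_lt_of_le hmb0 hmp
  have hmbp : (0:ℝ) < mb ^ (1/p) := Real.rpow_pos_of_pos hmb0 _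
  have hmmp : (0:ℝ) < mm ^ (1/p) := Real.rpow_pos_of_pos hmm _
  have hmpp : (0:ℝ) < mp ^ (1/p) := Real.rpow_pos_of_pos hmp0 _
  have hmup : (0:ℝ) ≤ mu ^ (1 + 1/p) := Real.rpow_nonneg hmu _
  have hlam' : lam ≤ mu / mb := (le_div_iff₀ hmb0).mpr (by linarith [mul_comm mb lam])
  have h1 : lam ^ (1 + 1/p) ≤ mu ^ (1 + 1/p) / (mb * mb ^ (1/p)) := by
    calc lam ^ (1 + 1/p) ≤ (mu / mb) ^ (1 + 1/p) :=
          Real.rpow_le_rpow hlam hlam' (by positivity)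
      _ = mu ^ (1 + 1/p) / (mb * mb ^ (1/p)) := by
          rw [Real.div_rpow hmu hmb0.le, Real.rpow_add hmb0, Real.rpow_one]
  have h2 : K * ε * mb ^ (1/p) / mm * lam ^ (1 + 1/p) ≤
      K * ε * mu ^ (1 + 1/p) / (mm * mb) := by
    calc K * ε * mb ^ (1/p) / mm * lam ^ (1 + 1/p)
        ≤ K * ε * mb ^ (1/p) / mm * (mu ^ (1 + 1/p) / (mb * mb ^ (1/p))) :=
          mul_le_mul_of_nonneg_left h1 (by positivity)
      _ = K * ε * mu ^ (1 + 1/p) / (mm * mb) := by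
          rw [div_mul_div_comm]
          rw [div_eq_div_iff (by positivity) (by positivity)]
          ring
  have h3 : K * ε * mu ^ (1 + 1/p) / (mm * mb) ≤ K * ε * mu ^ (1 + 1/p) / (mm * mm) := by
    gcongr
  have hgoal : K * mp ^ (1/p) * mm ^ (-(1/p) - 2) * mu ^ (1/p + 1) * ε
      = K * ε * mu ^ (1 + 1/p) / (mm * mm) * (mp ^ (1/p) / mm ^ (1/p)) := by
    rw [show (-(1/p) - 2 : ℝ) = -(1/p) + (-2) by ring, Real.rpow_add hmm,
      Real.rpow_neg hmm.le, mm_neg_two mm hmm, add_comm (1/p) 1]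
    rw [div_mul_div_comm, eq_div_iff (by positivity)]
    field_simp
  rw [hgoal]
  have hr : (1:ℝ) ≤ mp ^ (1/p) / mm ^ (1/p) :=
    (one_le_div hmmp).mpr (Real.rpow_le_rpow hmm.le (le_trans hmb hmp) (by positivity))
  calc K * ε * mb ^ (1/p) / mm * lam ^ (1 + 1/p)
      ≤ K * ε * mu ^ (1 + 1/p) / (mm * mm) := le_trans h2 h3
    _ ≤ K * ε * mu ^ (1 + 1/p) / (mm * mm) * (mp ^ (1/p) / mm ^ (1/p)) :=
        le_mul_of_one_le_right (by positivity) hr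

lemma fb2 (p K ε mm mb mp mu lam : ℝ) (hp : 1 < p) (hK : 0 ≤ K) (hε : 0 < ε)
    (hmm : 0 < mm) (hmb : mm ≤ mb) (hmp : mb ≤ mp) (hmu : 0 ≤ mu) (hlam : 0 ≤ lam)
    (h : mm * lam ≤ mu) :
    K * ε * mp ^ (1/p) / mb * lam ^ (1 + 1/p) ≤
      K * mp ^ (1/p) * mm ^ (-(1/p) - 2) * mu ^ (1/p + 1) * ε := by
  have hp0 : (0:ℝ) < p := one_pos.trans hp
  have hmb0 : 0 < mb := lt_of_lt_of_le hmm hmb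
  have hmp0 : 0 < mp := lt_of_lt_of_le hmb0 hmp
  have hmmp : (0:ℝ) < mm ^ (1/p) := Real.rpow_pos_of_pos hmm _
  have hmpp : (0:ℝ) < mp ^ (1/p) := Real.rpow_pos_of_pos hmp0 _
  have hmup : (0:ℝ) ≤ mu ^ (1 + 1/p) := Real.rpow_nonneg hmu _
  have hlam' : lam ≤ mu / mm := (le_div_iff₀ hmm).mpr (by linarith [mul_comm mm lam])
  have h1 : lam ^ (1 + 1/p) ≤ mu ^ (1 + 1/p) / (mm * mm ^ (1/p)) := by
    calc lam ^ (1 + 1/p) ≤ (mu / mm) ^ (1 + 1/p) :=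
          Real.rpow_le_rpow hlam hlam' (by positivity)
      _ = mu ^ (1 + 1/p) / (mm * mm ^ (1/p)) := by
          rw [Real.div_rpow hmu hmm.le, Real.rpow_add hmm, Real.rpow_one]
  have h2 : K * ε * mp ^ (1/p) / mb * lam ^ (1 + 1/p) ≤
      K * ε * mp ^ (1/p) * mu ^ (1 + 1/p) / (mm * mm ^ (1/p) * mb) := by
    calc K * ε * mp ^ (1/p) / mb * lam ^ (1 + 1/p)
        ≤ K * ε * mp ^ (1/p) / mb * (mu ^ (1 + 1/p) / (mm * mm ^ (1/p))) :=
          mul_le_mul_of_nonneg_left h1 (by positivity)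
      _ = K * ε * mp ^ (1/p) * mu ^ (1 + 1/p) / (mm * mm ^ (1/p) * mb) := by
          rw [div_mul_div_comm]
          rw [div_eq_div_iff (by positivity) (by positivity)]
          ring
  have h3 : K * ε * mp ^ (1/p) * mu ^ (1 + 1/p) / (mm * mm ^ (1/p) * mb) ≤
      K * ε * mp ^ (1/p) * mu ^ (1 + 1/p) / (mm * mm ^ (1/p) * mm) := by
    gcongr
  have hgoal : K * mp ^ (1/p) * mm ^ (-(1/p) - 2) * mu ^ (1/p + 1) * ε
      = K * ε * mp ^ (1/p) * mu ^ (1 + 1/p) / (mm * mm ^ (1/p) * mm) := by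
    rw [show (-(1/p) - 2 : ℝ) = -(1/p) + (-2) by ring, Real.rpow_add hmm,
      Real.rpow_neg hmm.le, mm_neg_two mm hmm, add_comm (1/p) 1]
    rw [eq_div_iff (by positivity)]
    field_simp
  rw [hgoal]
  exact le_trans h2 h3

/-- The variational first Dirichlet eigenvalue of the weighted `p`-Laplacian on `Ω`
with weight `w`, computed over the class `C¹_c(Ω)` of continuously differentiable
functions with compact support contained in `Ω`. -/
noncomputable def lambda1 (N : ℕ) (p : ℝ) (Ω : Set (EuclideanSpace ℝ (Fin N)))
    (w : EuclideanSpace ℝ (Fin N) → ℝ) : ℝ :=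
  sInf {r | ∃ u : EuclideanSpace ℝ (Fin N) → ℝ,
    ContDiff ℝ 1 u ∧ HasCompactSupport u ∧ tsupport u ⊆ Ω ∧ u ≠ 0 ∧
    r = (∫ x in Ω, ‖fderiv ℝ u x‖ ^ p) / (∫ x in Ω, w x * |u x| ^ p)}

set_option maxHeartbeats 2000000 in
/-- Theorem 2.2 of the paper: rate of convergence of the first Dirichlet
eigenvalue under periodic homogenization of the weight:
`|λ₁(m(·/ε)) − λ₁(m̄)| ≤ K m₊^{1/p} m₋^{−1/p−2} μ₁^{1/p+1} ε`. -/
theorem eigenvalue_convergence_rate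
    (N : ℕ) (hN : 1 ≤ N) (p : ℝ) (hp : 1 < p)
    (Ω : Set (EuclideanSpace ℝ (Fin N))) (hΩo : IsOpen Ω)
    (hΩb : Bornology.IsBounded Ω)
    (m : EuclideanSpace ℝ (Fin N) → ℝ) (hmm : Measurable m)
    (hper : ∀ (x : EuclideanSpace ℝ (Fin N)) (z : Fin N → ℤ),
      m (x + (show EuclideanSpace ℝ (Fin N) from WithLp.toLp 2 fun i => (z i : ℝ))) = m x)
    (mbar : ℝ) (hmbar : mbar = ∫ y in unitCube N, m y)
    (mminus mplus : ℝ) (hmminus : 0 < mminus)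
    (hbd : ∀ᵐ x : EuclideanSpace ℝ (Fin N), mminus ≤ m x ∧ m x ≤ mplus)
    (hmu : 0 < lambda1 N p Ω (fun _ => 1))
    (K : ℝ) (hK : 0 ≤ K)
    (hest : ∀ ε > (0 : ℝ), ∀ u : EuclideanSpace ℝ (Fin N) → ℝ,
      ContDiff ℝ 1 u → HasCompactSupport u → tsupport u ⊆ Ω →
      |∫ x in Ω, (m (ε⁻¹ • x) - mbar) * |u x| ^ p| ≤
        K * ε * (∫ x in Ω, |u x| ^ p) ^ ((p - 1) / p) *
          (∫ x in Ω, ‖fderiv ℝ u x‖ ^ p) ^ (1 / p)) :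
    ∀ ε > (0 : ℝ),
      |lambda1 N p Ω (fun x => m (ε⁻¹ • x)) - lambda1 N p Ω (fun _ => mbar)| ≤
        K * mplus ^ (1 / p) * mminus ^ (-(1 / p) - 2) *
          (lambda1 N p Ω (fun _ => 1)) ^ (1 / p + 1) * ε := by
  intro ε hε
  have hp0 : (0:ℝ) < p := one_pos.trans hp
  have he0 : (0:ℝ) < 1 + 1/p := by positivity
  -- volume of the unit cube
  have hcube : volume (unitCube N) = 1 := by
    have h : unitCube N = (MeasurableEquiv.toLp 2 (Fin N → ℝ)).symm ⁻¹'
        (Set.univ.pi fun _ => Set.Icc (0:ℝ) 1) := by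
      ext x
      simp only [unitCube, Set.mem_setOf_eq, Set.mem_preimage, Set.mem_univ_pi]
      rfl
    rw [h, (EuclideanSpace.volume_preserving_symm_measurableEquiv_toLp (Fin N)).measure_preimage
      (MeasurableSet.univ_pi fun _ => measurableSet_Icc).nullMeasurableSet]
    rw [volume_pi_pi]
    simp [Real.volume_Icc]
  -- bounds on mbar
  have hbdQ : ∀ᵐ x ∂(volume.restrict (unitCube N)), mminus ≤ m x ∧ m x ≤ mplus :=
    ae_restrict_of_ae hbd
  have hQconst : ∀ c : ℝ, IntegrableOn (fun _ : EuclideanSpace ℝ (Fin N) => c)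
      (unitCube N) volume := fun c =>
    (integrableOn_const_iff (C := c)).mpr (Or.inr (by rw [hcube]; exact ENNReal.one_lt_top))
  have hmint : IntegrableOn m (unitCube N) volume := by
    refine (hQconst mplus).mono' hmm.aestronglyMeasurable.restrict ?_
    filter_upwards [hbdQ] with x hx
    rw [Real.norm_eq_abs, abs_le]
    constructor <;> linarith [hx.1, hx.2, hmminus]
  have hconst : ∀ c : ℝ, (∫ _x in unitCube N, c ∂volume) = c := by
    intro c
    rw [setIntegral_const, measureReal_def, hcube]
    simp
  have hmbar_lb : mminus ≤ mbar := by
    rw [hmbar, ← hconst mminus]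
    exact integral_mono_ae (hQconst mminus) hmint (hbdQ.mono fun x hx => hx.1)
  have hmbar_ub : mbar ≤ mplus := by
    rw [hmbar, ← hconst mplus]
    exact integral_mono_ae hmint (hQconst mplus) (hbdQ.mono fun x hx => hx.2)
  have hmb0 : 0 < mbar := lt_of_lt_of_le hmminus hmbar_lb
  have hmp0 : 0 < mplus := lt_of_lt_of_le hmb0 hmbar_ub
  -- a.e. bounds for the rescaled weight
  have hsm : ∀ᵐ x : EuclideanSpace ℝ (Fin N), mminus ≤ m (ε⁻¹ • x) ∧ m (ε⁻¹ • x) ≤ mplus :=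
    (Measure.quasiMeasurePreserving_smul volume (inv_ne_zero hε.ne')).ae hbd
  have hsmΩ : ∀ᵐ x ∂(volume.restrict Ω), mminus ≤ m (ε⁻¹ • x) ∧ m (ε⁻¹ • x) ≤ mplus :=
    ae_restrict_of_ae hsm
  -- facts for an arbitrary test function
  have key : ∀ u : EuclideanSpace ℝ (Fin N) → ℝ,
      ContDiff ℝ 1 u → HasCompactSupport u → tsupport u ⊆ Ω → u ≠ 0 →
      (0 ≤ ∫ x in Ω, ‖fderiv ℝ u x‖ ^ p) ∧
      (0 < ∫ x in Ω, |u x| ^ p) ∧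
      (mminus * ∫ x in Ω, |u x| ^ p) ≤ (∫ x in Ω, m (ε⁻¹ • x) * |u x| ^ p) ∧
      (∫ x in Ω, mbar * |u x| ^ p) = mbar * ∫ x in Ω, |u x| ^ p ∧
      ((∫ x in Ω, ‖fderiv ℝ u x‖ ^ p) / (∫ x in Ω, m (ε⁻¹ • x) * |u x| ^ p) ≤
        (∫ x in Ω, ‖fderiv ℝ u x‖ ^ p) / (mbar * ∫ x in Ω, |u x| ^ p) +
        (K * ε) * mbar ^ (1/p) *
          ((∫ x in Ω, ‖fderiv ℝ u x‖ ^ p) / (mbar * ∫ x in Ω, |u x| ^ p)) ^ (1 + 1/p)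
            / mminus ∧
       (∫ x in Ω, ‖fderiv ℝ u x‖ ^ p) / (mbar * ∫ x in Ω, |u x| ^ p) ≤
        (∫ x in Ω, ‖fderiv ℝ u x‖ ^ p) / (∫ x in Ω, m (ε⁻¹ • x) * |u x| ^ p) +
        (K * ε) * mplus ^ (1/p) *
          ((∫ x in Ω, ‖fderiv ℝ u x‖ ^ p) / (∫ x in Ω, m (ε⁻¹ • x) * |u x| ^ p)) ^ (1 + 1/p)
            / mbar) := by
    intro u hu1 hu2 hu3 hu4
    have hAnn : 0 ≤ ∫ x in Ω, ‖fderiv ℝ u x‖ ^ p :=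
      integral_nonneg fun x => Real.rpow_nonneg (norm_nonneg _) p
    have hcontP : Continuous fun x => |u x| ^ p :=
      (continuous_abs.comp hu1.continuous).rpow_const (fun x => Or.inr hp0.le)
    have hcsP : HasCompactSupport fun x => |u x| ^ p :=
      hu2.comp_left (g := fun z : ℝ => |z| ^ p) (by simp [Real.zero_rpow hp0.ne'])
    have hIntP : IntegrableOn (fun x => |u x| ^ p) Ω volume :=
      (hcontP.integrable_of_hasCompactSupport hcsP).integrableOn
    have hPnn : ∀ x, 0 ≤ |u x| ^ p := fun x => Real.rpow_nonneg (abs_nonneg _) p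
    have hIpos : 0 < ∫ x in Ω, |u x| ^ p := by
      rw [setIntegral_pos_iff_support_of_nonneg_ae
        (Filter.Eventually.of_forall hPnn) hIntP]
      have hsupp : Function.support (fun x => |u x| ^ p) = Function.support u := by
        ext x
        simp [Function.mem_support, Real.rpow_eq_zero_iff_of_nonneg (abs_nonneg _), hp0.ne']
      rw [hsupp, Set.inter_eq_self_of_subset_left
        ((subset_closure : Function.support u ⊆ tsupport u).trans hu3)]
      exact (hu1.continuous.isOpen_support).measure_pos volume
        (Function.support_nonempty_iff.mpr hu4)
    have hmeasB : AEStronglyMeasurable (fun x => m (ε⁻¹ • x) * |u x| ^ p)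
        (volume.restrict Ω) :=
      ((hmm.comp (measurable_const_smul ε⁻¹)).mul hcontP.measurable).aestronglyMeasurable
    have hIntB : IntegrableOn (fun x => m (ε⁻¹ • x) * |u x| ^ p) Ω volume := by
      refine Integrable.mono' (hIntP.const_mul mplus) hmeasB ?_
      filter_upwards [hsmΩ] with x hx
      rw [Real.norm_eq_abs, abs_mul, abs_of_nonneg (hPnn x),
        abs_of_pos (lt_of_lt_of_le hmminus hx.1)]
      exact mul_le_mul_of_nonneg_right hx.2 (hPnn x)
    have hBlb : (mminus * ∫ x in Ω, |u x| ^ p) ≤ ∫ x in Ω, m (ε⁻¹ • x) * |u x| ^ p := by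
      rw [← integral_const_mul]
      refine integral_mono_ae (hIntP.const_mul mminus) hIntB ?_
      filter_upwards [hsmΩ] with x hx
      exact mul_le_mul_of_nonneg_right hx.1 (hPnn x)
    have hBub : (∫ x in Ω, m (ε⁻¹ • x) * |u x| ^ p) ≤ mplus * ∫ x in Ω, |u x| ^ p := by
      rw [← integral_const_mul]
      refine integral_mono_ae hIntB (hIntP.const_mul mplus) ?_
      filter_upwards [hsmΩ] with x hx
      exact mul_le_mul_of_nonneg_right hx.2 (hPnn x)
    have hBarEq : (∫ x in Ω, mbar * |u x| ^ p) = mbar * ∫ x in Ω, |u x| ^ p :=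
      integral_const_mul _ _
    have hdiff : (∫ x in Ω, (m (ε⁻¹ • x) - mbar) * |u x| ^ p)
        = (∫ x in Ω, m (ε⁻¹ • x) * |u x| ^ p) - mbar * ∫ x in Ω, |u x| ^ p := by
      simp only [sub_mul]
      rw [integral_sub hIntB (hIntP.const_mul mbar), hBarEq]
    have habs : |(∫ x in Ω, m (ε⁻¹ • x) * |u x| ^ p) - mbar * ∫ x in Ω, |u x| ^ p| ≤
        (K * ε) * (∫ x in Ω, |u x| ^ p) ^ ((p - 1)/p) *
          (∫ x in Ω, ‖fderiv ℝ u x‖ ^ p) ^ (1/p) := by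
      rw [← hdiff]
      exact hest ε hε u hu1 hu2 hu3
    exact ⟨hAnn, hIpos, hBlb, hBarEq,
      key_alg p (K * ε) _ _ _ _ mminus mbar mplus hp (by positivity) hAnn hIpos
        hmminus hmbar_lb hmbar_ub hBlb hBub rfl habs⟩
  -- unfold lambda1
  have hSE : lambda1 N p Ω (fun x => m (ε⁻¹ • x)) = sInf {r | ∃ u : EuclideanSpace ℝ (Fin N) → ℝ,
      ContDiff ℝ 1 u ∧ HasCompactSupport u ∧ tsupport u ⊆ Ω ∧ u ≠ 0 ∧
      r = (∫ x in Ω, ‖fderiv ℝ u x‖ ^ p) / (∫ x in Ω, m (ε⁻¹ • x) * |u x| ^ p)} := rfl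
  have hSB : lambda1 N p Ω (fun _ => mbar) = sInf {r | ∃ u : EuclideanSpace ℝ (Fin N) → ℝ,
      ContDiff ℝ 1 u ∧ HasCompactSupport u ∧ tsupport u ⊆ Ω ∧ u ≠ 0 ∧
      r = (∫ x in Ω, ‖fderiv ℝ u x‖ ^ p) / (∫ x in Ω, mbar * |u x| ^ p)} := rfl
  have hS1 : lambda1 N p Ω (fun _ => (1:ℝ)) = sInf {r | ∃ u : EuclideanSpace ℝ (Fin N) → ℝ,
      ContDiff ℝ 1 u ∧ HasCompactSupport u ∧ tsupport u ⊆ Ω ∧ u ≠ 0 ∧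
      r = (∫ x in Ω, ‖fderiv ℝ u x‖ ^ p) / (∫ x in Ω, 1 * |u x| ^ p)} := rfl
  rw [hS1] at hmu
  rw [hSE, hSB, hS1]
  -- nonnegativity of elements
  have hnnE : ∀ r ∈ {r | ∃ u : EuclideanSpace ℝ (Fin N) → ℝ,
      ContDiff ℝ 1 u ∧ HasCompactSupport u ∧ tsupport u ⊆ Ω ∧ u ≠ 0 ∧
      r = (∫ x in Ω, ‖fderiv ℝ u x‖ ^ p) / (∫ x in Ω, m (ε⁻¹ • x) * |u x| ^ p)}, 0 ≤ r := by
    rintro r ⟨u, h1, h2, h3, h4, rfl⟩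
    obtain ⟨hA, hI, hBlb, -, -⟩ := key u h1 h2 h3 h4
    exact div_nonneg hA (le_trans (mul_pos hmminus hI).le hBlb)
  have hnnB : ∀ r ∈ {r | ∃ u : EuclideanSpace ℝ (Fin N) → ℝ,
      ContDiff ℝ 1 u ∧ HasCompactSupport u ∧ tsupport u ⊆ Ω ∧ u ≠ 0 ∧
      r = (∫ x in Ω, ‖fderiv ℝ u x‖ ^ p) / (∫ x in Ω, mbar * |u x| ^ p)}, 0 ≤ r := by
    rintro r ⟨u, h1, h2, h3, h4, rfl⟩
    obtain ⟨hA, hI, -, hBarEq, -⟩ := key u h1 h2 h3 h4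
    rw [hBarEq]
    exact div_nonneg hA (mul_pos hmb0 hI).le
  have hnn1 : ∀ r ∈ {r | ∃ u : EuclideanSpace ℝ (Fin N) → ℝ,
      ContDiff ℝ 1 u ∧ HasCompactSupport u ∧ tsupport u ⊆ Ω ∧ u ≠ 0 ∧
      r = (∫ x in Ω, ‖fderiv ℝ u x‖ ^ p) / (∫ x in Ω, 1 * |u x| ^ p)}, 0 ≤ r := by
    rintro r ⟨u, h1, h2, h3, h4, rfl⟩
    obtain ⟨hA, hI, -, -, -⟩ := key u h1 h2 h3 h4
    simp only [one_mul]
    exact div_nonneg hA hI.le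
  have hbdE : BddBelow {r | ∃ u : EuclideanSpace ℝ (Fin N) → ℝ,
      ContDiff ℝ 1 u ∧ HasCompactSupport u ∧ tsupport u ⊆ Ω ∧ u ≠ 0 ∧
      r = (∫ x in Ω, ‖fderiv ℝ u x‖ ^ p) / (∫ x in Ω, m (ε⁻¹ • x) * |u x| ^ p)} :=
    ⟨(0:ℝ), hnnE⟩
  have hbdB : BddBelow {r | ∃ u : EuclideanSpace ℝ (Fin N) → ℝ,
      ContDiff ℝ 1 u ∧ HasCompactSupport u ∧ tsupport u ⊆ Ω ∧ u ≠ 0 ∧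
      r = (∫ x in Ω, ‖fderiv ℝ u x‖ ^ p) / (∫ x in Ω, mbar * |u x| ^ p)} :=
    ⟨(0:ℝ), hnnB⟩
  -- nonemptiness
  have hne1 : {r | ∃ u : EuclideanSpace ℝ (Fin N) → ℝ,
      ContDiff ℝ 1 u ∧ HasCompactSupport u ∧ tsupport u ⊆ Ω ∧ u ≠ 0 ∧
      r = (∫ x in Ω, ‖fderiv ℝ u x‖ ^ p) / (∫ x in Ω, 1 * |u x| ^ p)}.Nonempty := by
    by_contra hcon
    rw [Set.not_nonempty_iff_eq_empty] at hcon
    rw [hcon, Real.sInf_empty] at hmu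
    exact lt_irrefl 0 hmu
  obtain ⟨r₀, u₀, hu01, hu02, hu03, hu04, -⟩ := hne1
  have hneE : {r | ∃ u : EuclideanSpace ℝ (Fin N) → ℝ,
      ContDiff ℝ 1 u ∧ HasCompactSupport u ∧ tsupport u ⊆ Ω ∧ u ≠ 0 ∧
      r = (∫ x in Ω, ‖fderiv ℝ u x‖ ^ p) / (∫ x in Ω, m (ε⁻¹ • x) * |u x| ^ p)}.Nonempty :=
    ⟨_, u₀, hu01, hu02, hu03, hu04, rfl⟩
  have hneB : {r | ∃ u : EuclideanSpace ℝ (Fin N) → ℝ,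
      ContDiff ℝ 1 u ∧ HasCompactSupport u ∧ tsupport u ⊆ Ω ∧ u ≠ 0 ∧
      r = (∫ x in Ω, ‖fderiv ℝ u x‖ ^ p) / (∫ x in Ω, mbar * |u x| ^ p)}.Nonempty :=
    ⟨_, u₀, hu01, hu02, hu03, hu04, rfl⟩
  have hne1' : {r | ∃ u : EuclideanSpace ℝ (Fin N) → ℝ,
      ContDiff ℝ 1 u ∧ HasCompactSupport u ∧ tsupport u ⊆ Ω ∧ u ≠ 0 ∧
      r = (∫ x in Ω, ‖fderiv ℝ u x‖ ^ p) / (∫ x in Ω, 1 * |u x| ^ p)}.Nonempty :=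
    ⟨_, u₀, hu01, hu02, hu03, hu04, rfl⟩
  have hE0 := Real.sInf_nonneg hnnE
  have hB0 := Real.sInf_nonneg hnnB
  have hmu0 := hmu.le
  -- comparisons with μ₁
  have hmulE : mminus * sInf {r | ∃ u : EuclideanSpace ℝ (Fin N) → ℝ,
      ContDiff ℝ 1 u ∧ HasCompactSupport u ∧ tsupport u ⊆ Ω ∧ u ≠ 0 ∧
      r = (∫ x in Ω, ‖fderiv ℝ u x‖ ^ p) / (∫ x in Ω, m (ε⁻¹ • x) * |u x| ^ p)} ≤
      sInf {r | ∃ u : EuclideanSpace ℝ (Fin N) → ℝ,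
      ContDiff ℝ 1 u ∧ HasCompactSupport u ∧ tsupport u ⊆ Ω ∧ u ≠ 0 ∧
      r = (∫ x in Ω, ‖fderiv ℝ u x‖ ^ p) / (∫ x in Ω, 1 * |u x| ^ p)} := by
    refine le_csInf hne1' ?_
    rintro r ⟨u, h1, h2, h3, h4, rfl⟩
    obtain ⟨hA, hI, hBlb, -, -⟩ := key u h1 h2 h3 h4
    have h5 := csInf_le hbdE ⟨u, h1, h2, h3, h4, rfl⟩
    have h6 : (∫ x in Ω, ‖fderiv ℝ u x‖ ^ p) / (∫ x in Ω, m (ε⁻¹ • x) * |u x| ^ p) ≤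
        (∫ x in Ω, ‖fderiv ℝ u x‖ ^ p) / (mminus * ∫ x in Ω, |u x| ^ p) := by
      have := mul_pos hmminus hI
      gcongr
    have h7 : mminus * ((∫ x in Ω, ‖fderiv ℝ u x‖ ^ p) / (mminus * ∫ x in Ω, |u x| ^ p)) =
        (∫ x in Ω, ‖fderiv ℝ u x‖ ^ p) / (∫ x in Ω, |u x| ^ p) := by
      field_simp
    simp only [one_mul]
    calc mminus * sInf _ ≤ mminus * ((∫ x in Ω, ‖fderiv ℝ u x‖ ^ p) /
          (∫ x in Ω, m (ε⁻¹ • x) * |u x| ^ p)) := mul_le_mul_of_nonneg_left h5 hmminus.le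
      _ ≤ mminus * ((∫ x in Ω, ‖fderiv ℝ u x‖ ^ p) / (mminus * ∫ x in Ω, |u x| ^ p)) :=
          mul_le_mul_of_nonneg_left h6 hmminus.le
      _ = _ := h7
  have hmulB : mbar * sInf {r | ∃ u : EuclideanSpace ℝ (Fin N) → ℝ,
      ContDiff ℝ 1 u ∧ HasCompactSupport u ∧ tsupport u ⊆ Ω ∧ u ≠ 0 ∧
      r = (∫ x in Ω, ‖fderiv ℝ u x‖ ^ p) / (∫ x in Ω, mbar * |u x| ^ p)} ≤
      sInf {r | ∃ u : EuclideanSpace ℝ (Fin N) → ℝ,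
      ContDiff ℝ 1 u ∧ HasCompactSupport u ∧ tsupport u ⊆ Ω ∧ u ≠ 0 ∧
      r = (∫ x in Ω, ‖fderiv ℝ u x‖ ^ p) / (∫ x in Ω, 1 * |u x| ^ p)} := by
    refine le_csInf hne1' ?_
    rintro r ⟨u, h1, h2, h3, h4, rfl⟩
    obtain ⟨hA, hI, -, hBarEq, -⟩ := key u h1 h2 h3 h4
    have h5 := csInf_le hbdB ⟨u, h1, h2, h3, h4, rfl⟩
    rw [hBarEq] at h5
    have h7 : mbar * ((∫ x in Ω, ‖fderiv ℝ u x‖ ^ p) / (mbar * ∫ x in Ω, |u x| ^ p)) =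
        (∫ x in Ω, ‖fderiv ℝ u x‖ ^ p) / (∫ x in Ω, |u x| ^ p) := by
      field_simp
    simp only [one_mul]
    calc mbar * sInf _ ≤ mbar * ((∫ x in Ω, ‖fderiv ℝ u x‖ ^ p) /
          (mbar * ∫ x in Ω, |u x| ^ p)) := mul_le_mul_of_nonneg_left h5 hmb0.le
      _ = _ := h7
  -- the two one-sided estimates, with δ
  have boundE : ∀ δ > (0:ℝ), sInf {r | ∃ u : EuclideanSpace ℝ (Fin N) → ℝ,
      ContDiff ℝ 1 u ∧ HasCompactSupport u ∧ tsupport u ⊆ Ω ∧ u ≠ 0 ∧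
      r = (∫ x in Ω, ‖fderiv ℝ u x‖ ^ p) / (∫ x in Ω, m (ε⁻¹ • x) * |u x| ^ p)} ≤
      (sInf {r | ∃ u : EuclideanSpace ℝ (Fin N) → ℝ,
      ContDiff ℝ 1 u ∧ HasCompactSupport u ∧ tsupport u ⊆ Ω ∧ u ≠ 0 ∧
      r = (∫ x in Ω, ‖fderiv ℝ u x‖ ^ p) / (∫ x in Ω, mbar * |u x| ^ p)} + δ) +
      (K * ε * mbar ^ (1/p) / mminus) *
      (sInf {r | ∃ u : EuclideanSpace ℝ (Fin N) → ℝ,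
      ContDiff ℝ 1 u ∧ HasCompactSupport u ∧ tsupport u ⊆ Ω ∧ u ≠ 0 ∧
      r = (∫ x in Ω, ‖fderiv ℝ u x‖ ^ p) / (∫ x in Ω, mbar * |u x| ^ p)} + δ) ^ (1 + 1/p) := by
    intro δ hδ
    obtain ⟨r, hrS, hrlt⟩ := Real.lt_sInf_add_pos hneB hδ
    obtain ⟨u, h1, h2, h3, h4, rfl⟩ := hrS
    obtain ⟨hA, hI, hBlb, hBarEq, hk1, hk2⟩ := key u h1 h2 h3 h4
    rw [hBarEq] at hrlt
    have h5 := csInf_le hbdE ⟨u, h1, h2, h3, h4, rfl⟩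
    have hq0 : 0 ≤ (∫ x in Ω, ‖fderiv ℝ u x‖ ^ p) / (mbar * ∫ x in Ω, |u x| ^ p) :=
      div_nonneg hA (mul_pos hmb0 hI).le
    have h7 := Real.rpow_le_rpow hq0 hrlt.le he0.le
    refine le_trans h5 (le_trans hk1 ?_)
    have h8 : (K * ε) * mbar ^ (1/p) *
        ((∫ x in Ω, ‖fderiv ℝ u x‖ ^ p) / (mbar * ∫ x in Ω, |u x| ^ p)) ^ (1 + 1/p) / mminus
        = (K * ε * mbar ^ (1/p) / mminus) *
        ((∫ x in Ω, ‖fderiv ℝ u x‖ ^ p) / (mbar * ∫ x in Ω, |u x| ^ p)) ^ (1 + 1/p) := by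
      ring
    rw [h8]
    exact add_le_add hrlt.le (mul_le_mul_of_nonneg_left h7 (by positivity))
  have boundB : ∀ δ > (0:ℝ), sInf {r | ∃ u : EuclideanSpace ℝ (Fin N) → ℝ,
      ContDiff ℝ 1 u ∧ HasCompactSupport u ∧ tsupport u ⊆ Ω ∧ u ≠ 0 ∧
      r = (∫ x in Ω, ‖fderiv ℝ u x‖ ^ p) / (∫ x in Ω, mbar * |u x| ^ p)} ≤
      (sInf {r | ∃ u : EuclideanSpace ℝ (Fin N) → ℝ,
      ContDiff ℝ 1 u ∧ HasCompactSupport u ∧ tsupport u ⊆ Ω ∧ u ≠ 0 ∧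
      r = (∫ x in Ω, ‖fderiv ℝ u x‖ ^ p) / (∫ x in Ω, m (ε⁻¹ • x) * |u x| ^ p)} + δ) +
      (K * ε * mplus ^ (1/p) / mbar) *
      (sInf {r | ∃ u : EuclideanSpace ℝ (Fin N) → ℝ,
      ContDiff ℝ 1 u ∧ HasCompactSupport u ∧ tsupport u ⊆ Ω ∧ u ≠ 0 ∧
      r = (∫ x in Ω, ‖fderiv ℝ u x‖ ^ p) / (∫ x in Ω, m (ε⁻¹ • x) * |u x| ^ p)} + δ) ^ (1 + 1/p) := by
    intro δ hδ
    obtain ⟨r, hrS, hrlt⟩ := Real.lt_sInf_add_pos hneE hδ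
    obtain ⟨u, h1, h2, h3, h4, rfl⟩ := hrS
    obtain ⟨hA, hI, hBlb, hBarEq, hk1, hk2⟩ := key u h1 h2 h3 h4
    have h5 := csInf_le hbdB ⟨u, h1, h2, h3, h4, rfl⟩
    rw [hBarEq] at h5
    have hq0 : 0 ≤ (∫ x in Ω, ‖fderiv ℝ u x‖ ^ p) / (∫ x in Ω, m (ε⁻¹ • x) * |u x| ^ p) :=
      div_nonneg hA (le_trans (mul_pos hmminus hI).le hBlb)
    have h7 := Real.rpow_le_rpow hq0 hrlt.le he0.le
    refine le_trans h5 (le_trans hk2 ?_)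
    have h8 : (K * ε) * mplus ^ (1/p) *
        ((∫ x in Ω, ‖fderiv ℝ u x‖ ^ p) / (∫ x in Ω, m (ε⁻¹ • x) * |u x| ^ p)) ^ (1 + 1/p) / mbar
        = (K * ε * mplus ^ (1/p) / mbar) *
        ((∫ x in Ω, ‖fderiv ℝ u x‖ ^ p) / (∫ x in Ω, m (ε⁻¹ • x) * |u x| ^ p)) ^ (1 + 1/p) := by
      ring
    rw [h8]
    exact add_le_add hrlt.le (mul_le_mul_of_nonneg_left h7 (by positivity))
  have hlimE := lim_aux _ _ _ _ hB0 he0 boundE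
  have hlimB := lim_aux _ _ _ _ hE0 he0 boundB
  have hfb1 := fb1 p K ε mminus mbar mplus _ _ hp hK hε hmminus hmbar_lb hmbar_ub hmu0 hB0 hmulB
  have hfb2 := fb2 p K ε mminus mbar mplus _ _ hp hK hε hmminus hmbar_lb hmbar_ub hmu0 hE0 hmulE
  rw [abs_sub_le_iff]
  constructor <;> linarith
end
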